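/- arXiv:2102.05103 — 4 statements merged into one kernel-verified Lean document; each statement's English description precedes it below -/
import Mathlib

section
/- Fix a factor index k and symmetric matrices D₁,…,D_r at which V := I_n + ∑_{k=1}^r ∑_{j=1}^{l_k} Z_{(k,j)}·D_k·Z_{(k,j)}ᵀ is positive definite. Regard the log-likelihood l as a function of the unrestricted q_k×q_k matrix argument D_k, all other quantities held fixed. Then this function is differentiable at the given symmetric D_k, and its matrix of partial derivatives — the q_k×q_k matrix whose (m,n) entry is ∂l/∂(D_k)_{m,n} — equals (1/2)·∑_{j=1}^{l_k} Z_{(k,j)}ᵀ·V⁻¹·(σ⁻²·e·eᵀ − V)·V⁻¹·Z_{(k,j)}. -/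
open Matrix Polynomial

attribute [local instance] Matrix.linftyOpNormedRing Matrix.linftyOpNormedAlgebra

section Aux

variable {N m : ℕ}

private lemma stmt2_aux_det (A H : Matrix (Fin m) (Fin m) ℝ) (hA : IsUnit A.det) :
    HasDerivAt (fun t : ℝ => (A + t • H).det) (A.det * (A⁻¹ * H).trace) 0 := by
  have key : ∀ t : ℝ, (A + t • H).det
      = A.det * (1 + (A⁻¹ * H).trace * t
        + (Matrix.det (1 + (X : ℝ[X]) • (A⁻¹ * H).map C)).divX.divX.eval t * t ^ 2) := by
    intro t
    have h1 : A + t • H = A * (1 + t • (A⁻¹ * H)) := by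
      rw [mul_add, mul_one, Matrix.mul_smul, ← Matrix.mul_assoc,
        Matrix.mul_nonsing_inv _ hA, Matrix.one_mul]
    rw [h1, Matrix.det_mul, Matrix.det_one_add_smul]
  have h2 : HasDerivAt (fun t : ℝ => 1 + (A⁻¹ * H).trace * t
        + (Matrix.det (1 + (X : ℝ[X]) • (A⁻¹ * H).map C)).divX.divX.eval t * t ^ 2)
      ((A⁻¹ * H).trace) 0 := by
    have hp := Polynomial.hasDerivAt (Matrix.det (1 + (X : ℝ[X]) • (A⁻¹ * H).map C)).divX.divX (0:ℝ)
    have hsq : HasDerivAt (fun t : ℝ => t ^ 2) 0 0 := by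
      simpa using hasDerivAt_pow 2 (0:ℝ)
    have := ((hasDerivAt_const (0:ℝ) (1:ℝ)).fun_add
        (((hasDerivAt_id (0:ℝ)).const_mul ((A⁻¹ * H).trace)))).fun_add (hp.fun_mul hsq)
    simpa using this
  simpa [key] using h2.const_mul A.det

private lemma stmt2_aux_inv (A H : Matrix (Fin m) (Fin m) ℝ) (hA : IsUnit A) :
    HasDerivAt (fun t : ℝ => (A + t • H)⁻¹) (-(A⁻¹ * H * A⁻¹)) 0 := by
  have hline : HasDerivAt (fun t : ℝ => A + t • H) H 0 := by
    have h := ((hasDerivAt_id (0:ℝ)).smul_const H).const_add A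
    simp only [id_eq, one_smul] at h
    exact h
  have hinv := (hasFDerivAt_ringInverse (𝕜 := ℝ) hA.unit)
  have hA0 : (hA.unit : Matrix (Fin m) (Fin m) ℝ) = A + (0:ℝ) • H := by simp
  rw [hA0] at hinv
  have hcomp := hinv.comp_hasDerivAt (x := (0:ℝ)) hline
  have hval : ((hA.unit⁻¹ : (Matrix (Fin m) (Fin m) ℝ)ˣ) : Matrix (Fin m) (Fin m) ℝ) = A⁻¹ := by
    rw [Matrix.nonsing_inv_eq_ringInverse, ← Ring.inverse_unit hA.unit, IsUnit.unit_spec]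
  have : (fun t : ℝ => (A + t • H)⁻¹) = fun t => Ring.inverse (A + t • H) := by
    funext t; rw [Matrix.nonsing_inv_eq_ringInverse]
  rw [this]
  simp only [hval] at hcomp
  exact hcomp

private lemma stmt2_aux_detdiff (A : Matrix (Fin m) (Fin m) ℝ) :
    DifferentiableAt ℝ Matrix.det A := by
  have : Matrix.det (R := ℝ) (n := Fin m)
      = fun B => ∑ σ : Equiv.Perm (Fin m), (Equiv.Perm.sign σ : ℝ) * ∏ i, B (σ i) i := by
    funext B; rw [Matrix.det_apply']
  rw [this]
  apply DifferentiableAt.fun_sum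
  intro σ _
  have hp' : DifferentiableAt ℝ (fun B : Matrix (Fin m) (Fin m) ℝ => ∏ i, B (σ i) i) A :=
    (HasFDerivAt.finset_prod (u := Finset.univ)
      (g := fun i (B : Matrix (Fin m) (Fin m) ℝ) => B (σ i) i)
      (g' := fun i => (Matrix.entryLinearMap ℝ ℝ (σ i) i).toContinuousLinearMap)
      (fun i _ =>
        ((Matrix.entryLinearMap ℝ ℝ (σ i) i).toContinuousLinearMap).hasFDerivAt)).differentiableAt
  exact (differentiableAt_const _).mul hp'

private lemma stmt2_aux1 (e : Fin N → ℝ) (S : Matrix (Fin N) (Fin N) ℝ) (hS : Sᵀ = S)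
    (Z : Matrix (Fin N) (Fin m) ℝ) (a b : Fin m) :
    e ⬝ᵥ ((S * (Z * Matrix.single a b (1:ℝ) * Zᵀ) * S) *ᵥ e)
      = (Zᵀ *ᵥ (S *ᵥ e)) a * (Zᵀ *ᵥ (S *ᵥ e)) b := by
  have key : ∀ y : Fin N → ℝ, e ⬝ᵥ (S *ᵥ y) = (S *ᵥ e) ⬝ᵥ y := by
    intro y
    rw [Matrix.dotProduct_mulVec]
    conv_lhs => rw [← hS]
    rw [Matrix.vecMul_transpose]
  have key2 : ∀ y : Fin m → ℝ, (S *ᵥ e) ⬝ᵥ (Z *ᵥ y) = (Zᵀ *ᵥ (S *ᵥ e)) ⬝ᵥ y := by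
    intro y
    rw [Matrix.dotProduct_mulVec]
    conv_lhs => rw [show Z = Zᵀᵀ from (Matrix.transpose_transpose Z).symm]
    rw [Matrix.vecMul_transpose]
  have hsplit : (S * (Z * Matrix.single a b (1:ℝ) * Zᵀ) * S) *ᵥ e
      = S *ᵥ (Z *ᵥ (Matrix.single a b (1:ℝ) *ᵥ (Zᵀ *ᵥ (S *ᵥ e)))) := by
    simp only [Matrix.mulVec_mulVec, Matrix.mul_assoc]
  rw [hsplit, key, key2]
  simp [dotProduct, Matrix.mulVec, Matrix.single, ite_and, Finset.mul_sum,
    Finset.sum_mul]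

private lemma stmt2_aux2 (S : Matrix (Fin N) (Fin N) ℝ) (hS : Sᵀ = S)
    (Z : Matrix (Fin N) (Fin m) ℝ) (a b : Fin m) :
    (S * (Z * Matrix.single a b (1:ℝ) * Zᵀ)).trace = (Zᵀ * S * Z) a b := by
  have hSab : ∀ i j, S i j = S j i := fun i j => Matrix.IsSymm.apply hS j i
  simp only [Matrix.trace, Matrix.diag_apply, Matrix.mul_apply, Matrix.single,
    Matrix.of_apply, Matrix.transpose_apply, ite_mul, mul_ite, mul_one, mul_zero, zero_mul,
    ite_and, Finset.sum_ite_eq, Finset.sum_ite_eq', Finset.mem_univ, if_true, Finset.mul_sum,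
    Finset.sum_mul]
  exact Finset.sum_congr rfl fun x _ => Finset.sum_congr rfl fun i _ => by rw [hSab x i]; ring

private lemma stmt2_aux4 (e : Fin N → ℝ) (S : Matrix (Fin N) (Fin N) ℝ) (hS : Sᵀ = S)
    (Z : Matrix (Fin N) (Fin m) ℝ) (a b : Fin m) :
    (Zᵀ * S * vecMulVec e e * S * Z) a b
      = (Zᵀ *ᵥ (S *ᵥ e)) a * (Zᵀ *ᵥ (S *ᵥ e)) b := by
  have hfact : Zᵀ * S * vecMulVec e e * S * Z
      = vecMulVec ((Zᵀ * S) *ᵥ e) ((Zᵀ * Sᵀ) *ᵥ e) := by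
    ext i j
    simp only [Matrix.mul_apply, Matrix.vecMulVec_apply, Matrix.mulVec, dotProduct,
      Matrix.transpose_apply, Finset.sum_mul, Finset.mul_sum]
    rw [Finset.sum_comm]
    exact Finset.sum_congr rfl fun x _ => Finset.sum_congr rfl fun x1 _ =>
      Finset.sum_congr rfl fun x2 _ => Finset.sum_congr rfl fun i1 _ => by ring
  rw [hfact]
  simp [Matrix.vecMulVec_apply, ← Matrix.mulVec_mulVec, hS]

end Aux

/-- The log-likelihood of the multi-factor LMM, regarded as a function of the
unrestricted `q_k × q_k` matrix argument `D_k` (all other quantities held fixed), is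
differentiable at a symmetric point where `V` is positive definite, and its matrix of partial
derivatives there is `(1/2) ∑_j Z_{(k,j)}ᵀ V⁻¹ (σ⁻² e eᵀ − V) V⁻¹ Z_{(k,j)}`. -/
theorem stmt2 (n r : ℕ) (hn : 0 < n) (σ : ℝ) (hσ : 0 < σ) (e : Fin n → ℝ)
    (l q : Fin r → ℕ)
    (Z : (k : Fin r) → Fin (l k) → Matrix (Fin n) (Fin (q k)) ℝ)
    (D : (k : Fin r) → Matrix (Fin (q k)) (Fin (q k)) ℝ)
    (hDsymm : ∀ k', (D k').IsSymm)
    (k : Fin r)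
    (V : Matrix (Fin n) (Fin n) ℝ)
    (hV : V = 1 + ∑ k', ∑ j, Z k' j * D k' * (Z k' j)ᵀ)
    (hVpd : V.PosDef)
    (f : ((Fin (q k) × Fin (q k)) → ℝ) → ℝ)
    -- `f W` is the log-likelihood `l` evaluated with `D_k` replaced by the matrix `W`
    (hf : f = fun W =>
      -(1 / 2 : ℝ) * ((n : ℝ) * Real.log (σ ^ 2)
        + (σ ^ 2)⁻¹ *
          (e ⬝ᵥ ((1 + ∑ k', ∑ j,
            Z k' j * Function.update D k (Matrix.of fun i j' => W (i, j')) k' * (Z k' j)ᵀ)⁻¹ *ᵥ e))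
        + Real.log (1 + ∑ k', ∑ j,
            Z k' j * Function.update D k (Matrix.of fun i j' => W (i, j')) k' * (Z k' j)ᵀ).det)) :
    DifferentiableAt ℝ f (fun p => D k p.1 p.2) ∧
    ∀ a b : Fin (q k),
      fderiv ℝ f (fun p => D k p.1 p.2) (Pi.single (a, b) 1) =
        ((1 / 2 : ℝ) •
          ∑ j, (Z k j)ᵀ * V⁻¹ * ((σ ^ 2)⁻¹ • vecMulVec e e - V) * V⁻¹ * Z k j) a b := by
  classical
  set W₀ : (Fin (q k) × Fin (q k)) → ℝ := fun p => D k p.1 p.2 with hW₀def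
  set c₁ : ℝ := (n : ℝ) * Real.log (σ ^ 2) with hc₁
  -- the linear part of `W ↦ V(W)`
  set Lmap : ((Fin (q k) × Fin (q k)) → ℝ) →ₗ[ℝ] Matrix (Fin n) (Fin n) ℝ :=
    { toFun := fun W => ∑ j, Z k j * (Matrix.of fun i j' => W (i, j')) * (Z k j)ᵀ
      map_add' := by
        intro W1 W2
        have h : (Matrix.of fun i j' => (W1 + W2) (i, j'))
            = (Matrix.of fun i j' => W1 (i, j')) + (Matrix.of fun i j' => W2 (i, j')) := rfl
        simp only [h, Matrix.mul_add, Matrix.add_mul, Finset.sum_add_distrib]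
      map_smul' := by
        intro c W
        have h : (Matrix.of fun i j' => (c • W) (i, j'))
            = c • (Matrix.of fun i j' => W (i, j')) := rfl
        simp only [h, RingHom.id_apply, Finset.smul_sum, Matrix.mul_smul, Matrix.smul_mul] }
    with hLmap
  set C0 : Matrix (Fin n) (Fin n) ℝ :=
    1 + ∑ k' ∈ Finset.univ.erase k, ∑ j, Z k' j * D k' * (Z k' j)ᵀ with hC0
  have hg : ∀ M₀ : Matrix (Fin (q k)) (Fin (q k)) ℝ,
      (1 + ∑ k', ∑ j, Z k' j * Function.update D k M₀ k' * (Z k' j)ᵀ)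
        = C0 + ∑ j, Z k j * M₀ * (Z k j)ᵀ := by
    intro M₀
    have hsplit := Finset.sum_erase_add Finset.univ
      (fun k' => ∑ j, Z k' j * Function.update D k M₀ k' * (Z k' j)ᵀ) (Finset.mem_univ k)
    rw [← hsplit]
    simp only [Function.update_self]
    have herase : ∑ k' ∈ Finset.univ.erase k, ∑ j,
          Z k' j * Function.update D k M₀ k' * (Z k' j)ᵀ
        = ∑ k' ∈ Finset.univ.erase k, ∑ j, Z k' j * D k' * (Z k' j)ᵀ := by
      refine Finset.sum_congr rfl fun k' hk' => ?_
      rw [Function.update_of_ne (Finset.ne_of_mem_erase hk')]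
    rw [herase, hC0, add_assoc]
  have hgL : ∀ W : (Fin (q k) × Fin (q k)) → ℝ,
      (1 + ∑ k', ∑ j,
          Z k' j * Function.update D k (Matrix.of fun i j' => W (i, j')) k' * (Z k' j)ᵀ)
        = C0 + Lmap W := fun W => hg _
  have hgV : C0 + Lmap W₀ = V := by
    have h1 := hg (D k)
    rw [Function.update_eq_self k D] at h1
    rw [hV, h1]
    rfl
  set ℓe : Matrix (Fin n) (Fin n) ℝ →ₗ[ℝ] ℝ :=
    { toFun := fun M => e ⬝ᵥ (M *ᵥ e)
      map_add' := fun M1 M2 => by simp [Matrix.add_mulVec]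
      map_smul' := fun c M => by simp [Matrix.smul_mulVec] } with hℓe
  have hdet : IsUnit V.det := isUnit_iff_ne_zero.mpr (ne_of_gt hVpd.det_pos)
  have hVunit : IsUnit V := (Matrix.isUnit_iff_isUnit_det V).mpr hdet
  have hVs : Vᵀ = V :=
    (Matrix.conjTranspose_eq_transpose_of_trivial V).symm.trans hVpd.isHermitian
  have hVinvs : (V⁻¹)ᵀ = V⁻¹ := by rw [Matrix.transpose_nonsing_inv, hVs]
  set f' : ((Fin (q k) × Fin (q k)) → ℝ) → ℝ := fun W =>
    -(1 / 2 : ℝ) * (c₁ + (σ ^ 2)⁻¹ * (e ⬝ᵥ ((C0 + Lmap W)⁻¹ *ᵥ e))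
      + Real.log (C0 + Lmap W).det) with hf'
  have hfeq : f = f' := by
    rw [hf]
    funext W
    rw [hf', hgL W]
  rw [hfeq]
  -- differentiability
  have hLdiff : DifferentiableAt ℝ (fun W => (Lmap W : Matrix (Fin n) (Fin n) ℝ)) W₀ := by
    simpa using Lmap.toContinuousLinearMap.differentiableAt (x := W₀)
  have hgdiff : DifferentiableAt ℝ (fun W => C0 + Lmap W) W₀ := hLdiff.const_add C0
  have hinvdiff : DifferentiableAt ℝ (fun W => (C0 + Lmap W)⁻¹) W₀ := by
    have h1 : DifferentiableAt ℝ (Ring.inverse : Matrix (Fin n) (Fin n) ℝ →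
        Matrix (Fin n) (Fin n) ℝ) (C0 + Lmap W₀) := by
      rw [hgV]; exact differentiableAt_inverse hVunit
    have h2 := h1.comp W₀ hgdiff
    have h3 : (fun W => (C0 + Lmap W)⁻¹)
        = (Ring.inverse : Matrix (Fin n) (Fin n) ℝ → Matrix (Fin n) (Fin n) ℝ)
          ∘ (fun W => C0 + Lmap W) := by
      funext W; simp [Function.comp, Matrix.nonsing_inv_eq_ringInverse]
    rw [h3]; exact h2
  have hdotdiff : DifferentiableAt ℝ (fun W => e ⬝ᵥ ((C0 + Lmap W)⁻¹ *ᵥ e)) W₀ := by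
    have := (ℓe.toContinuousLinearMap.differentiableAt
      (x := (C0 + Lmap W₀)⁻¹)).comp W₀ hinvdiff
    exact this
  have hlogdiff : DifferentiableAt ℝ (fun W => Real.log (C0 + Lmap W).det) W₀ := by
    have h1 : DifferentiableAt ℝ (fun W => (C0 + Lmap W).det) W₀ := by
      have hd : DifferentiableAt ℝ Matrix.det (C0 + Lmap W₀) := by
        rw [hgV]; exact stmt2_aux_detdiff V
      exact hd.comp W₀ hgdiff
    refine h1.log ?_
    rw [hgV]; exact ne_of_gt hVpd.det_pos
  have hfdiff : DifferentiableAt ℝ f' W₀ := by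
    rw [hf']
    exact (((differentiableAt_const c₁).add (hdotdiff.const_mul ((σ:ℝ) ^ 2)⁻¹)).add
      hlogdiff).const_mul (-(1/2 : ℝ))
  refine ⟨hfdiff, ?_⟩
  intro a b
  set E : (Fin (q k) × Fin (q k)) → ℝ := Pi.single (a, b) (1:ℝ) with hE
  have hEmat : (Matrix.of fun i j' => E (i, j')) = Matrix.single a b (1:ℝ) := by
    ext i j'
    simp [hE, Pi.single_apply, Matrix.single, Prod.ext_iff, eq_comm]
  set H : Matrix (Fin n) (Fin n) ℝ := ∑ j, Z k j * Matrix.single a b (1:ℝ) * (Z k j)ᵀ with hHdef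
  have hH : Lmap E = H := by
    rw [show (Lmap E : Matrix (Fin n) (Fin n) ℝ)
      = ∑ j, Z k j * (Matrix.of fun i j' => E (i, j')) * (Z k j)ᵀ from rfl, hEmat]
  set u : Fin (l k) → Fin (q k) → ℝ := fun j => (Z k j)ᵀ *ᵥ (V⁻¹ *ᵥ e) with hu
  set d : ℝ := -(1/2 : ℝ) * ((σ ^ 2)⁻¹ * (e ⬝ᵥ ((-(V⁻¹ * H * V⁻¹)) *ᵥ e))
    + (V⁻¹ * H).trace) with hd
  -- the one-dimensional derivative along direction E
  have hφeq : (fun t : ℝ => f' (W₀ + t • E))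
      = fun t => -(1 / 2 : ℝ) * (c₁ + (σ ^ 2)⁻¹ * (e ⬝ᵥ ((V + t • H)⁻¹ *ᵥ e))
        + Real.log (V + t • H).det) := by
    funext t
    have harg : C0 + Lmap (W₀ + t • E) = V + t • H := by
      rw [Lmap.map_add, Lmap.map_smul, ← add_assoc, hgV, hH]
    simp only [hf']
    rw [harg]
  have hd1 : HasDerivAt (fun t : ℝ => e ⬝ᵥ ((V + t • H)⁻¹ *ᵥ e))
      (e ⬝ᵥ ((-(V⁻¹ * H * V⁻¹)) *ᵥ e)) 0 := by
    have h0 := stmt2_aux_inv V H hVunit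
    have := (ℓe.toContinuousLinearMap.hasFDerivAt
      (x := (V + (0:ℝ) • H)⁻¹)).comp_hasDerivAt 0 h0
    simp only [LinearMap.coe_toContinuousLinearMap'] at this
    replace this := this.congr_deriv (map_neg ℓe _)
    rw [show (e ⬝ᵥ ((-(V⁻¹ * H * V⁻¹)) *ᵥ e)) = ℓe (-(V⁻¹ * H * V⁻¹)) from rfl,
      map_neg ℓe]
    exact this
  have hd2 : HasDerivAt (fun t : ℝ => Real.log (V + t • H).det) ((V⁻¹ * H).trace) 0 := by
    have h1 := stmt2_aux_det V H hdet
    have h2 := h1.log (by simpa using ne_of_gt hVpd.det_pos)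
    have h3 : V.det * (V⁻¹ * H).trace / (V + (0:ℝ) • H).det = (V⁻¹ * H).trace := by
      rw [show V + (0:ℝ) • H = V by simp, mul_comm, mul_div_assoc,
        div_self (ne_of_gt hVpd.det_pos), mul_one]
    rw [h3] at h2
    exact h2
  have hφ' : HasDerivAt (fun t : ℝ => -(1 / 2 : ℝ) * (c₁
      + (σ ^ 2)⁻¹ * (e ⬝ᵥ ((V + t • H)⁻¹ *ᵥ e)) + Real.log (V + t • H).det)) d 0 := by
    have := (((hasDerivAt_const (0:ℝ) c₁).fun_add (hd1.const_mul ((σ:ℝ) ^ 2)⁻¹)).fun_add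
      hd2).const_mul (-(1/2 : ℝ))
    simpa [hd] using this
  have hcurve : HasDerivAt (fun t : ℝ => W₀ + t • E) E 0 := by
    simpa using ((hasDerivAt_id (0:ℝ)).smul_const E).const_add W₀
  have hfd : HasFDerivAt f' (fderiv ℝ f' W₀) (W₀ + (0:ℝ) • E) := by
    rw [show W₀ + (0:ℝ) • E = W₀ by simp]
    exact hfdiff.hasFDerivAt
  have hcomp : HasDerivAt (fun t : ℝ => f' (W₀ + t • E)) (fderiv ℝ f' W₀ E) 0 :=
    by have := hfd.comp_hasDerivAt 0 hcurve; exact this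
  rw [hφeq] at hcomp
  have huniq : fderiv ℝ f' W₀ E = d := hcomp.unique hφ'
  rw [huniq]
  -- final linear-algebra computation
  have hdot : e ⬝ᵥ ((V⁻¹ * H * V⁻¹) *ᵥ e) = ∑ j, u j a * u j b := by
    have hdist : V⁻¹ * H * V⁻¹
        = ∑ j, V⁻¹ * (Z k j * Matrix.single a b (1:ℝ) * (Z k j)ᵀ) * V⁻¹ := by
      rw [hHdef, Finset.mul_sum, Finset.sum_mul]
    rw [hdist]
    have hsum : e ⬝ᵥ ((∑ j, V⁻¹ * (Z k j * Matrix.single a b (1:ℝ) * (Z k j)ᵀ) * V⁻¹) *ᵥ e)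
        = ∑ j, e ⬝ᵥ ((V⁻¹ * (Z k j * Matrix.single a b (1:ℝ) * (Z k j)ᵀ) * V⁻¹) *ᵥ e) :=
      map_sum ℓe _ Finset.univ
    rw [hsum]
    exact Finset.sum_congr rfl fun j _ => stmt2_aux1 e V⁻¹ hVinvs (Z k j) a b
  have htr : (V⁻¹ * H).trace = ∑ j, ((Z k j)ᵀ * V⁻¹ * Z k j) a b := by
    rw [hHdef, Finset.mul_sum, Matrix.trace_sum]
    exact Finset.sum_congr rfl fun j _ => stmt2_aux2 V⁻¹ hVinvs (Z k j) a b
  have hRHS : ∀ j, ((Z k j)ᵀ * V⁻¹ * ((σ ^ 2)⁻¹ • vecMulVec e e - V) * V⁻¹ * Z k j) a b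
      = (σ ^ 2)⁻¹ * (u j a * u j b) - ((Z k j)ᵀ * V⁻¹ * Z k j) a b := by
    intro j
    have hexp : (Z k j)ᵀ * V⁻¹ * ((σ ^ 2)⁻¹ • vecMulVec e e - V) * V⁻¹ * Z k j
        = (σ ^ 2)⁻¹ • ((Z k j)ᵀ * V⁻¹ * vecMulVec e e * V⁻¹ * Z k j)
          - (Z k j)ᵀ * V⁻¹ * Z k j := by
      rw [Matrix.mul_sub, Matrix.sub_mul, Matrix.sub_mul]
      congr 1
      · rw [Matrix.mul_smul, Matrix.smul_mul, Matrix.smul_mul]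
      · rw [Matrix.mul_assoc ((Z k j)ᵀ) V⁻¹ V, Matrix.nonsing_inv_mul V hdet, Matrix.mul_one]
    rw [hexp, Matrix.sub_apply, Matrix.smul_apply, stmt2_aux4 e V⁻¹ hVinvs (Z k j) a b,
      smul_eq_mul]
  have hRHSsum : ((1 / 2 : ℝ) •
        ∑ j, (Z k j)ᵀ * V⁻¹ * ((σ ^ 2)⁻¹ • vecMulVec e e - V) * V⁻¹ * Z k j) a b
      = (1/2 : ℝ) * ∑ j, ((σ ^ 2)⁻¹ * (u j a * u j b)
          - ((Z k j)ᵀ * V⁻¹ * Z k j) a b) := by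
    rw [Matrix.smul_apply, Matrix.sum_apply, smul_eq_mul]
    congr 1
    exact Finset.sum_congr rfl fun j _ => hRHS j
  rw [hRHSsum, hd, Matrix.neg_mulVec, dotProduct_neg, hdot, htr,
    Finset.sum_sub_distrib, ← Finset.mul_sum]
  ring
end

section
/- Fix a factor index k and symmetric matrices D₁,…,D_r at which V := I_n + ∑_{k=1}^r ∑_{j=1}^{l_k} Z_{(k,j)}·D_k·Z_{(k,j)}ᵀ is positive definite. Consider the function g : ℝ^{q_k(q_k+1)/2} → ℝ obtained by evaluating the log-likelihood l with D_k replaced by the unique symmetric matrix whose half-vectorization is the argument v, all other quantities held fixed. Then g is differentiable at v = vech(D_k), and its gradient there (a column vector of length q_k(q_k+1)/2) equals (1/2)·𝒟_{q_k}ᵀ·vec( ∑_{j=1}^{l_k} Z_{(k,j)}ᵀ·V⁻¹·(σ⁻²·e·eᵀ − V)·V⁻¹·Z_{(k,j)} ). -/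
open Matrix MeasureTheory ProbabilityTheory

/-- Column-major vectorization of a matrix: the entry of `vec A` at index `(j, i)`
(column `j`, row `i`) is `A i j`. -/
def vec {α β R : Type*} (A : Matrix α β R) : β × α → R := fun p => A p.2 p.1

/-- Index type for the half-vectorization of a `q × q` matrix: pairs `(j, i)`
(column `j`, row `i`) lying on or below the diagonal, i.e. with `j ≤ i`. -/
abbrev VechIdx (q : ℕ) := { p : Fin q × Fin q // p.1 ≤ p.2 }

/-- Half-vectorization: stacks the entries of `A` on and below the diagonal column by column. -/
def vech {R : Type*} {q : ℕ} (A : Matrix (Fin q) (Fin q) R) : VechIdx q → R :=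
  fun p => A p.1.2 p.1.1

/-- The duplication matrix `𝒟_q`: the unique `q² × (q(q+1)/2)` matrix with
`𝒟_q · vech A = vec A` for every symmetric `q × q` matrix `A`. -/
def dup (q : ℕ) : Matrix (Fin q × Fin q) (VechIdx q) ℝ := fun v w =>
  if (v.1 = w.1.1 ∧ v.2 = w.1.2) ∨ (v.1 = w.1.2 ∧ v.2 = w.1.1) then 1 else 0

/-- The commutation matrix `K_{q,q}`: the unique `q² × q²` matrix with
`K_{q,q} · vec A = vec Aᵀ` for every `q × q` matrix `A`. -/
def commMat (q : ℕ) : Matrix (Fin q × Fin q) (Fin q × Fin q) ℝ := fun a b =>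
  if a.1 = b.2 ∧ a.2 = b.1 then 1 else 0

/-- The symmetrization matrix `N_q = (1/2)(I_{q²} + K_{q,q})`. -/
noncomputable def Nmat (q : ℕ) : Matrix (Fin q × Fin q) (Fin q × Fin q) ℝ :=
  (1 / 2 : ℝ) • (1 + commMat q)

/-- The unique symmetric matrix whose half-vectorization is `v`. -/
def unvech {q : ℕ} (v : VechIdx q → ℝ) : Matrix (Fin q) (Fin q) ℝ := fun i j =>
  if h : j ≤ i then v ⟨(j, i), h⟩ else v ⟨(i, j), le_of_not_ge h⟩

lemma unvech_add {q : ℕ} (a b : VechIdx q → ℝ) : unvech (a + b) = unvech a + unvech b := by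
  funext i j; simp only [unvech, Matrix.add_apply, Pi.add_apply]; split_ifs <;> rfl

lemma unvech_smul {q : ℕ} (t : ℝ) (a : VechIdx q → ℝ) : unvech (t • a) = t • unvech a := by
  funext i j; simp only [unvech, Matrix.smul_apply, Pi.smul_apply]; split_ifs <;> rfl

lemma unvech_vech {q : ℕ} {A : Matrix (Fin q) (Fin q) ℝ} (hA : A.IsSymm) :
    unvech (vech A) = A := by
  funext i j
  simp only [unvech, vech]
  split_ifs with h
  · rfl
  · exact hA.apply i j

lemma unvech_single {q : ℕ} (w : VechIdx q) (i j : Fin q) :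
    unvech (Pi.single w 1) i j = dup q (i, j) w := by
  obtain ⟨⟨c, rr⟩, hc⟩ := w
  simp only [Fin.le_def] at hc
  unfold unvech dup
  by_cases h : j ≤ i
  · rw [dif_pos h, Pi.single_apply]
    refine if_congr ?_ rfl rfl
    have h' := h; simp only [Fin.le_def] at h'
    simp only [Subtype.ext_iff, Prod.ext_iff, Fin.ext_iff]
    omega
  · rw [dif_neg h, Pi.single_apply]
    refine if_congr ?_ rfl rfl
    have h' := lt_of_not_ge h; simp only [Fin.lt_def] at h'
    simp only [Subtype.ext_iff, Prod.ext_iff, Fin.ext_iff]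
    omega

lemma trace_mul_unvech_single {q : ℕ} (B : Matrix (Fin q) (Fin q) ℝ) (w : VechIdx q) :
    Matrix.trace (B * unvech (Pi.single w 1)) = ((dup q)ᵀ *ᵥ _root_.vec B) w := by
  simp only [Matrix.trace, Matrix.diag, Matrix.mul_apply, Matrix.mulVec, dotProduct,
    Matrix.transpose_apply, _root_.vec, unvech_single]
  rw [Fintype.sum_prod_type, Finset.sum_comm]
  refine Finset.sum_congr rfl fun a _ => Finset.sum_congr rfl fun b _ => ?_
  exact mul_comm _ _

lemma dot_mulVec_eq_trace {n : ℕ} (e : Fin n → ℝ) (A : Matrix (Fin n) (Fin n) ℝ) :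
    e ⬝ᵥ (A *ᵥ e) = Matrix.trace (A * Matrix.vecMulVec e e) := by
  simp only [Matrix.trace, Matrix.diag, Matrix.mul_apply, Matrix.mulVec, dotProduct,
    Matrix.vecMulVec_apply, Finset.mul_sum]
  exact Finset.sum_congr rfl fun a _ => Finset.sum_congr rfl fun b _ => by ring

lemma trace_conj {n q : ℕ} (Z : Matrix (Fin n) (Fin q) ℝ) (G : Matrix (Fin n) (Fin n) ℝ)
    (U : Matrix (Fin q) (Fin q) ℝ) :
    Matrix.trace (G * (Z * U * Zᵀ)) = Matrix.trace (Zᵀ * G * Z * U) := by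
  rw [← Matrix.mul_assoc, Matrix.trace_mul_cycle, ← Matrix.mul_assoc]

lemma trace_sandwich {n : ℕ} (S E G : Matrix (Fin n) (Fin n) ℝ) :
    Matrix.trace (G * S * G * E) = Matrix.trace (G * E * G * S) := by
  rw [Matrix.trace_mul_cycle, Matrix.trace_mul_cycle, ← Matrix.mul_assoc]

lemma key_j {n q : ℕ} (Z : Matrix (Fin n) (Fin q) ℝ) (V : Matrix (Fin n) (Fin n) ℝ)
    (hdet : IsUnit V.det) (c : ℝ) (E : Matrix (Fin n) (Fin n) ℝ)
    (U : Matrix (Fin q) (Fin q) ℝ) :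
    Matrix.trace ((Zᵀ * V⁻¹ * (c • E - V) * V⁻¹ * Z) * U)
      = c * Matrix.trace ((V⁻¹ * (Z * U * Zᵀ) * V⁻¹) * E)
        - Matrix.trace (V⁻¹ * (Z * U * Zᵀ)) := by
  have h1 : Matrix.trace ((V⁻¹ * (Z * U * Zᵀ) * V⁻¹) * E)
      = Matrix.trace ((Zᵀ * (V⁻¹ * E * V⁻¹) * Z) * U) := by
    rw [trace_sandwich, trace_conj]
  have h2 : Matrix.trace (V⁻¹ * (Z * U * Zᵀ)) = Matrix.trace ((Zᵀ * V⁻¹ * Z) * U) :=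
    trace_conj Z (V⁻¹) U
  have e1 : Matrix.trace ((Zᵀ * V⁻¹ * (c • E) * V⁻¹ * Z) * U)
      = c * Matrix.trace ((Zᵀ * (V⁻¹ * E * V⁻¹) * Z) * U) := by
    rw [Matrix.mul_smul, Matrix.smul_mul, Matrix.smul_mul, Matrix.smul_mul,
      Matrix.trace_smul, smul_eq_mul, Matrix.mul_assoc Zᵀ V⁻¹ E,
      Matrix.mul_assoc Zᵀ (V⁻¹ * E) V⁻¹]
  have e2 : Matrix.trace ((Zᵀ * V⁻¹ * V * V⁻¹ * Z) * U)
      = Matrix.trace ((Zᵀ * V⁻¹ * Z) * U) := by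
    rw [Matrix.nonsing_inv_mul_cancel_right _ _ hdet]
  rw [h1, h2, Matrix.mul_sub, Matrix.sub_mul, Matrix.sub_mul, Matrix.sub_mul,
    Matrix.trace_sub, e1, e2]

attribute [local instance] Matrix.linftyOpNormedRing Matrix.linftyOpNormedAlgebra

lemma diffAt_finset_prod {ι E : Type*} [NormedAddCommGroup E] [NormedSpace ℝ E]
    (s : Finset ι) (f : ι → E → ℝ) (x : E)
    (h : ∀ i ∈ s, DifferentiableAt ℝ (f i) x) :
    DifferentiableAt ℝ (fun y => ∏ i ∈ s, f i y) x := by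
  classical
  induction s using Finset.induction with
  | empty => simpa using differentiableAt_const (1 : ℝ)
  | insert _ _ hni ih =>
    rename_i a s'
    simp only [Finset.prod_insert hni]
    exact (h a (Finset.mem_insert_self a s')).mul
      (ih fun i hi => h i (Finset.mem_insert_of_mem hi))

set_option maxHeartbeats 1600000 in
/-- The log-likelihood of the multi-factor LMM, regarded as a function of
`vech(D_k)` (all other quantities held fixed, `D_k` being the unique symmetric matrix with the
given half-vectorization), is differentiable at `vech(D_k)` when `V` is positive definite there,
with gradient `(1/2) 𝒟_{q_k}ᵀ vec( ∑_j Z_{(k,j)}ᵀ V⁻¹ (σ⁻² e eᵀ − V) V⁻¹ Z_{(k,j)} )`. -/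
theorem stmt3 (n r : ℕ) (hn : 0 < n) (σ : ℝ) (hσ : 0 < σ) (e : Fin n → ℝ)
    (l q : Fin r → ℕ)
    (Z : (k : Fin r) → Fin (l k) → Matrix (Fin n) (Fin (q k)) ℝ)
    (D : (k : Fin r) → Matrix (Fin (q k)) (Fin (q k)) ℝ)
    (hDsymm : ∀ k', (D k').IsSymm)
    (k : Fin r)
    (V : Matrix (Fin n) (Fin n) ℝ)
    (hV : V = 1 + ∑ k', ∑ j, Z k' j * D k' * (Z k' j)ᵀ)
    (hVpd : V.PosDef)
    (g : (VechIdx (q k) → ℝ) → ℝ)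
    -- `g v` is the log-likelihood `l` evaluated with `D_k` replaced by the unique symmetric
    -- matrix whose half-vectorization is `v`
    (hg : g = fun v =>
      -(1 / 2 : ℝ) * ((n : ℝ) * Real.log (σ ^ 2)
        + (σ ^ 2)⁻¹ *
          (e ⬝ᵥ ((1 + ∑ k', ∑ j,
            Z k' j * Function.update D k (unvech v) k' * (Z k' j)ᵀ)⁻¹ *ᵥ e))
        + Real.log (1 + ∑ k', ∑ j,
            Z k' j * Function.update D k (unvech v) k' * (Z k' j)ᵀ).det)) :
    DifferentiableAt ℝ g (vech (D k)) ∧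
    ∀ w : VechIdx (q k),
      fderiv ℝ g (vech (D k)) (Pi.single w 1) =
        ((1 / 2 : ℝ) • (dup (q k))ᵀ.mulVec
          (_root_.vec (∑ j, (Z k j)ᵀ * V⁻¹ * ((σ ^ 2)⁻¹ • vecMulVec e e - V) * V⁻¹ * Z k j))) w := by
  classical
  have hdetpos : (0 : ℝ) < V.det := hVpd.det_pos
  have hdetu : IsUnit V.det := hdetpos.ne'.isUnit
  haveI : CompleteSpace (Matrix (Fin n) (Fin n) ℝ) := FiniteDimensional.complete ℝ _
  set v₀ : VechIdx (q k) → ℝ := vech (D k) with hv₀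
  -- the linear part
  let Lmap : (VechIdx (q k) → ℝ) →ₗ[ℝ] Matrix (Fin n) (Fin n) ℝ :=
    { toFun := fun u => ∑ j, Z k j * unvech u * (Z k j)ᵀ
      map_add' := fun a b => by
        simp only [unvech_add, Matrix.add_mul, Matrix.mul_add, Finset.sum_add_distrib]
      map_smul' := fun t a => by
        simp only [unvech_smul, Matrix.mul_smul, Matrix.smul_mul, Finset.smul_sum,
          RingHom.id_apply] }
  set C1 : Matrix (Fin n) (Fin n) ℝ :=
    1 + ∑ k' ∈ Finset.univ.erase k, ∑ j, Z k' j * D k' * (Z k' j)ᵀ with hC1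
  have hsum : ∀ u : VechIdx (q k) → ℝ,
      (1 + ∑ k', ∑ j, Z k' j * Function.update D k (unvech u) k' * (Z k' j)ᵀ)
        = C1 + Lmap u := by
    intro u
    rw [hC1, add_assoc]
    congr 1
    rw [← Finset.sum_erase_add _ _ (Finset.mem_univ k)]
    congr 1
    · exact Finset.sum_congr rfl fun k' hk' => by
        rw [Function.update_of_ne (Finset.ne_of_mem_erase hk')]
    · show (∑ j, Z k j * Function.update D k (unvech u) k * (Z k j)ᵀ) = _
      rw [Function.update_self]
      rfl
  have hW0 : C1 + Lmap v₀ = V := by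
    rw [← hsum v₀, hv₀, unvech_vech (hDsymm k), Function.update_eq_self, hV]
  have gmeq : g = fun v => -(1 / 2 : ℝ) * ((n : ℝ) * Real.log (σ ^ 2)
      + (σ ^ 2)⁻¹ * (e ⬝ᵥ ((C1 + Lmap v)⁻¹ *ᵥ e)) + Real.log (C1 + Lmap v).det) := by
    rw [hg]
    funext v
    rw [← hsum v]
  -- derivative of the affine map
  have hFd : HasFDerivAt (fun v => C1 + Lmap v) (LinearMap.toContinuousLinearMap Lmap) v₀ :=
    (LinearMap.toContinuousLinearMap Lmap).hasFDerivAt.const_add C1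
  -- entry evaluation CLM
  let entryL : Fin n → Fin n → (Matrix (Fin n) (Fin n) ℝ →L[ℝ] ℝ) := fun i j =>
    LinearMap.toContinuousLinearMap
      { toFun := fun M : Matrix (Fin n) (Fin n) ℝ => M i j
        map_add' := fun _ _ => rfl
        map_smul' := fun _ _ => rfl }
  -- quadratic form CLM
  let quadL : Matrix (Fin n) (Fin n) ℝ →L[ℝ] ℝ :=
    LinearMap.toContinuousLinearMap
      { toFun := fun M : Matrix (Fin n) (Fin n) ℝ => e ⬝ᵥ (M *ᵥ e)
        map_add' := fun A B => by simp [Matrix.add_mulVec, dotProduct_add]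
        map_smul' := fun t A => by simp [Matrix.smul_mulVec, dotProduct_smul] }
  have hdet_diff : DifferentiableAt ℝ (fun v => (C1 + Lmap v).det) v₀ := by
    have hentry : ∀ i j, DifferentiableAt ℝ (fun v => (C1 + Lmap v) i j) v₀ := fun i j =>
      (entryL i j).differentiableAt.comp v₀ hFd.differentiableAt
    simp only [Matrix.det_apply']
    exact DifferentiableAt.fun_sum fun σp _ =>
      (diffAt_finset_prod Finset.univ _ v₀ fun i _ => hentry (σp i) i).const_mul _
  have hinv_diff : DifferentiableAt ℝ (fun v => e ⬝ᵥ ((C1 + Lmap v)⁻¹ *ᵥ e)) v₀ := by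
    obtain ⟨u, hu⟩ := hVpd.isUnit
    have h1 : DifferentiableAt ℝ (Ring.inverse : Matrix (Fin n) (Fin n) ℝ →
        Matrix (Fin n) (Fin n) ℝ) (C1 + Lmap v₀) := by
      rw [hW0, ← hu]
      exact (hasFDerivAt_ringInverse u).differentiableAt
    have h2 : DifferentiableAt ℝ (fun v => Ring.inverse (C1 + Lmap v)) v₀ := by
      have := h1.comp v₀ hFd.differentiableAt; exact this
    have h3 := quadL.differentiableAt.comp v₀ h2
    have hfe : (fun v => e ⬝ᵥ ((C1 + Lmap v)⁻¹ *ᵥ e))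
        = fun v => quadL (Ring.inverse (C1 + Lmap v)) := by
      funext v
      rw [Matrix.nonsing_inv_eq_ringInverse]
      rfl
    rw [hfe]
    exact h3
  have hgdiff : DifferentiableAt ℝ g v₀ := by
    rw [gmeq]
    have hlogdet : DifferentiableAt ℝ (fun v => Real.log (C1 + Lmap v).det) v₀ :=
      hdet_diff.log (by rw [hW0]; exact hdetpos.ne')
    exact (((differentiableAt_const _).add (hinv_diff.const_mul _)).add hlogdet).const_mul _
  refine ⟨hgdiff, fun w => ?_⟩
  set u1 : VechIdx (q k) → ℝ := Pi.single w 1 with hu1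
  set U : Matrix (Fin (q k)) (Fin (q k)) ℝ := unvech u1 with hU
  set H : Matrix (Fin n) (Fin n) ℝ := ∑ j, Z k j * U * (Z k j)ᵀ with hH
  have hLu1 : Lmap u1 = H := rfl
  have hline : HasDerivAt (fun t : ℝ => v₀ + t • u1) u1 0 := by
    simpa using ((hasDerivAt_id (0 : ℝ)).smul_const u1).const_add v₀
  have hcomp : HasDerivAt (fun t : ℝ => g (v₀ + t • u1)) (fderiv ℝ g v₀ u1) 0 := by
    have := hgdiff.hasFDerivAt.comp_hasDerivAt_of_eq 0 hline (by simp); exact this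
  have hWline : ∀ t : ℝ, C1 + Lmap (v₀ + t • u1) = V + t • H := by
    intro t
    rw [map_add, _root_.map_smul, hLu1, ← add_assoc, hW0]
  obtain ⟨uu, huu⟩ := hVpd.isUnit
  have hlineM : HasDerivAt (fun t : ℝ => V + t • H) H 0 := by
    have := ((hasDerivAt_id (0 : ℝ)).smul_const H).const_add V; rw [one_smul] at this; exact this
  have hinv1 : HasDerivAt
      (fun t : ℝ => (Ring.inverse (V + t • H) : Matrix (Fin n) (Fin n) ℝ))
      (-(V⁻¹ * H * V⁻¹)) 0 := by
    have h := (hasFDerivAt_ringInverse (𝕜 := ℝ) uu).comp_hasDerivAt_of_eq 0 hlineM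
      (by simp [huu])
    have hval : (-(ContinuousLinearMap.mulLeftRight ℝ (Matrix (Fin n) (Fin n) ℝ)
        ↑uu⁻¹ ↑uu⁻¹)) H = -(V⁻¹ * H * V⁻¹) := by
      simp only [ContinuousLinearMap.neg_apply, ContinuousLinearMap.mulLeftRight_apply]
      rw [Matrix.coe_units_inv, huu]
    rw [hval] at h
    exact h
  have hA : HasDerivAt (fun t : ℝ => e ⬝ᵥ ((Ring.inverse (V + t • H)
      : Matrix (Fin n) (Fin n) ℝ) *ᵥ e)) (e ⬝ᵥ ((-(V⁻¹ * H * V⁻¹)) *ᵥ e)) 0 := by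
    exact quadL.hasFDerivAt.comp_hasDerivAt 0 hinv1
  set P : Polynomial ℝ :=
    (Matrix.det (1 + (Polynomial.X : Polynomial ℝ) • (V⁻¹ * H).map Polynomial.C)).divX.divX
    with hP
  have hdet1 : HasDerivAt (fun t : ℝ => (V + t • H).det) (V.det * (V⁻¹ * H).trace) 0 := by
    have hrw : ∀ t : ℝ, (V + t • H).det
        = V.det * (1 + (V⁻¹ * H).trace * t + P.eval t * t ^ 2) := by
      intro t
      have hfac : V + t • H = V * (1 + t • (V⁻¹ * H)) := by
        rw [Matrix.mul_add, Matrix.mul_one, Matrix.mul_smul,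
          Matrix.mul_nonsing_inv_cancel_left _ _ hdetu]
      rw [hfac, Matrix.det_mul, Matrix.det_one_add_smul]
    have hfeq : (fun t : ℝ => (V + t • H).det)
        = fun t => V.det * (1 + (V⁻¹ * H).trace * t + P.eval t * t ^ 2) := funext hrw
    rw [hfeq]
    have ha : HasDerivAt (fun t : ℝ => 1 + (V⁻¹ * H).trace * t) ((V⁻¹ * H).trace) 0 := by
      simpa using ((hasDerivAt_id (0 : ℝ)).const_mul ((V⁻¹ * H).trace)).const_add 1
    have hb : HasDerivAt (fun t : ℝ => P.eval t * t ^ 2) 0 0 := by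
      have := (Polynomial.hasDerivAt P 0).mul (hasDerivAt_pow 2 0); simp at this; exact this
    simpa using (ha.add hb).const_mul V.det
  have hlog : HasDerivAt (fun t : ℝ => Real.log (V + t • H).det)
      (V.det * (V⁻¹ * H).trace / V.det) 0 := by
    have h0 : (V + (0 : ℝ) • H).det ≠ 0 := by simpa using hdetpos.ne'
    simpa using hdet1.log h0
  have hexp : (fun t : ℝ => g (v₀ + t • u1)) = fun t =>
      -(1 / 2 : ℝ) * ((n : ℝ) * Real.log (σ ^ 2)
        + (σ ^ 2)⁻¹ * (e ⬝ᵥ ((Ring.inverse (V + t • H) : Matrix (Fin n) (Fin n) ℝ) *ᵥ e))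
        + Real.log (V + t • H).det) := by
    simp only [gmeq]
    funext t
    rw [hWline t, Matrix.nonsing_inv_eq_ringInverse]
  have hd : HasDerivAt (fun t : ℝ => g (v₀ + t • u1))
      (-(1 / 2 : ℝ) * ((σ ^ 2)⁻¹ * (e ⬝ᵥ ((-(V⁻¹ * H * V⁻¹)) *ᵥ e))
        + V.det * (V⁻¹ * H).trace / V.det)) 0 := by
    rw [hexp]
    have := (((hA.const_mul ((σ ^ 2)⁻¹)).const_add ((n : ℝ) * Real.log (σ ^ 2))).add
      hlog).const_mul (-(1 / 2 : ℝ))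
    simpa using this
  have heq := hcomp.unique hd
  rw [heq]
  have hkey : Matrix.trace ((∑ j, (Z k j)ᵀ * V⁻¹ * ((σ ^ 2)⁻¹ • vecMulVec e e - V) * V⁻¹
        * Z k j) * U)
      = (σ ^ 2)⁻¹ * Matrix.trace ((V⁻¹ * H * V⁻¹) * vecMulVec e e)
        - Matrix.trace (V⁻¹ * H) := by
    rw [Matrix.sum_mul, Matrix.trace_sum, hH, Matrix.mul_sum, Matrix.sum_mul, Matrix.sum_mul,
      Matrix.trace_sum, Matrix.trace_sum, Finset.mul_sum, ← Finset.sum_sub_distrib]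
    exact Finset.sum_congr rfl fun j _ => key_j (Z k j) V hdetu ((σ ^ 2)⁻¹) (vecMulVec e e) U
  rw [Pi.smul_apply, smul_eq_mul, ← trace_mul_unvech_single, ← hu1, ← hU, hkey,
    Matrix.neg_mulVec, dotProduct_neg, dot_mulVec_eq_trace e (V⁻¹ * H * V⁻¹),
    mul_div_cancel_left₀ _ hdetpos.ne']
  ring
end

section
/- For every factor index k, the cross-covariance matrix between the score s_β and the score s_k is the zero matrix: Cov(s_β, s_k) = 0_{p×q_k²}. -/
open Matrix MeasureTheory ProbabilityTheory
open scoped NNReal ENNReal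

set_option linter.unusedSectionVars false
set_option maxHeartbeats 1000000

section auxiliary
open Real

open MeasureTheory ProbabilityTheory Real
open scoped NNReal ENNReal

lemma aux_pdf (x : ℝ) : gaussianPDFReal 0 1 x = (√(2*π))⁻¹ * Real.exp (-(1/2) * x^2) := by
  simp only [gaussianPDFReal, NNReal.coe_one, mul_one, sub_zero]
  congr 1
  ring

lemma aux_integrable_pow_mul_exp (m : ℕ) :
    Integrable (fun x : ℝ => x ^ m * Real.exp (-(1/2) * x ^ 2)) := by
  have hmeas : AEStronglyMeasurable (fun x : ℝ => x ^ m * Real.exp (-(1/2) * x ^ 2)) volume :=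
    ((measurable_id.pow_const m).mul
      (((measurable_id.pow_const 2).const_mul (-(1/2))).exp)).aestronglyMeasurable
  refine Integrable.mono' ((integrable_exp_neg_mul_sq (by norm_num : (0:ℝ) < 1/4)).const_mul
    (1 + (4:ℝ)^m * (m.factorial : ℝ))) hmeas (Filter.Eventually.of_forall fun x => ?_)
  have hfac : (0:ℝ) < (m.factorial : ℝ) := by exact_mod_cast Nat.factorial_pos m
  have h1 : |x| ^ m ≤ 1 + (x^2) ^ m := by
    rcases le_total (|x|) 1 with h | h
    · have : |x| ^ m ≤ 1 := pow_le_one₀ (abs_nonneg x) h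
      nlinarith [pow_nonneg (sq_nonneg x) m]
    · have hx : |x| ≤ x ^ 2 := by nlinarith [abs_nonneg x, sq_abs x]
      have : |x| ^ m ≤ (x^2) ^ m := pow_le_pow_left₀ (abs_nonneg x) hx m
      linarith
  have h2 : (x^2) ^ m ≤ (4:ℝ)^m * (m.factorial : ℝ) * Real.exp (x^2/4) := by
    have := Real.pow_div_factorial_le_exp (x := x^2/4) (by positivity) m
    rw [div_pow] at this
    have h4 : (0:ℝ) < (4:ℝ)^m := by positivity
    rw [div_div, div_le_iff₀ (by positivity)] at this
    linarith [this]
  have key : |x| ^ m * Real.exp (-(1/2) * x ^ 2)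
      ≤ (1 + (4:ℝ)^m * (m.factorial : ℝ)) * Real.exp (-(1/4) * x ^ 2) := by
    have hee : Real.exp (-(1/2) * x^2) ≤ Real.exp (-(1/4) * x^2) := by
      apply Real.exp_le_exp.2; nlinarith [sq_nonneg x]
    have e1 : Real.exp (x^2/4) * Real.exp (-(1/2) * x^2) = Real.exp (-(1/4) * x^2) := by
      rw [← Real.exp_add]; congr 1; ring
    have hb : |x| ^ m * Real.exp (-(1/2) * x ^ 2)
        ≤ (1 + (4:ℝ)^m * (m.factorial : ℝ) * Real.exp (x^2/4)) * Real.exp (-(1/2) * x^2) := by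
      apply mul_le_mul_of_nonneg_right _ (Real.exp_nonneg _)
      calc |x| ^ m ≤ 1 + (x^2)^m := h1
        _ ≤ 1 + (4:ℝ)^m * (m.factorial : ℝ) * Real.exp (x^2/4) := by linarith
    calc |x| ^ m * Real.exp (-(1/2) * x ^ 2)
        ≤ (1 + (4:ℝ)^m * (m.factorial : ℝ) * Real.exp (x^2/4)) * Real.exp (-(1/2) * x^2) := hb
      _ = Real.exp (-(1/2) * x^2) + (4:ℝ)^m * (m.factorial : ℝ) * (Real.exp (x^2/4) * Real.exp (-(1/2)*x^2)) := by ring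
      _ = Real.exp (-(1/2) * x^2) + (4:ℝ)^m * (m.factorial : ℝ) * Real.exp (-(1/4)*x^2) := by rw [e1]
      _ ≤ Real.exp (-(1/4) * x^2) + (4:ℝ)^m * (m.factorial : ℝ) * Real.exp (-(1/4)*x^2) := by
          have := mul_le_mul_of_nonneg_left hee (le_of_lt (by positivity : (0:ℝ) < 1)); linarith
      _ = (1 + (4:ℝ)^m * (m.factorial : ℝ)) * Real.exp (-(1/4) * x ^ 2) := by ring
  calc ‖x ^ m * Real.exp (-(1/2) * x ^ 2)‖ = |x|^m * Real.exp (-(1/2) * x^2) := by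
        rw [norm_mul, norm_pow, Real.norm_eq_abs, Real.norm_eq_abs, abs_of_pos (Real.exp_pos _)]
    _ ≤ _ := key

lemma aux_gauss_eq : (gaussianReal 0 1 : Measure ℝ)
    = volume.withDensity (fun x => ((Real.toNNReal (gaussianPDFReal 0 1 x) : ℝ≥0) : ℝ≥0∞)) := by
  rw [gaussianReal_of_var_ne_zero _ one_ne_zero]
  rfl

lemma aux_gauss_integral (g : ℝ → ℝ) :
    ∫ x, g x ∂(gaussianReal 0 1) = ∫ x, gaussianPDFReal 0 1 x * g x := by
  rw [aux_gauss_eq, integral_withDensity_eq_integral_smul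
    ((measurable_gaussianPDFReal 0 1).real_toNNReal) g]
  congr 1
  ext x
  rw [NNReal.smul_def, Real.coe_toNNReal _ (gaussianPDFReal_nonneg _ _ _), smul_eq_mul]

lemma aux_gauss_integrable_pow (m : ℕ) : Integrable (fun x : ℝ => x ^ m) (gaussianReal 0 1) := by
  rw [aux_gauss_eq, integrable_withDensity_iff_integrable_smul
    ((measurable_gaussianPDFReal 0 1).real_toNNReal)]
  have : (fun x : ℝ => (Real.toNNReal (gaussianPDFReal 0 1 x)) • (x ^ m))
      = fun x => (√(2*π))⁻¹ * (x ^ m * Real.exp (-(1/2) * x^2)) := by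
    ext x
    rw [NNReal.smul_def, Real.coe_toNNReal _ (gaussianPDFReal_nonneg _ _ _), smul_eq_mul, aux_pdf]
    ring
  rw [this]
  exact (aux_integrable_pow_mul_exp m).const_mul _

lemma aux_gauss_odd (m : ℕ) (hm : Odd m) : ∫ x, x ^ m ∂(gaussianReal 0 1) = 0 := by
  rw [aux_gauss_integral]
  have h := MeasureTheory.integral_neg_eq_self (fun x => gaussianPDFReal 0 1 x * x ^ m)
    (volume : Measure ℝ)
  have hodd : (fun x : ℝ => gaussianPDFReal 0 1 (-x) * (-x) ^ m)
      = fun x => -(gaussianPDFReal 0 1 x * x ^ m) := by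
    ext x
    rw [hm.neg_pow]
    have : gaussianPDFReal 0 1 (-x) = gaussianPDFReal 0 1 x := by
      rw [aux_pdf, aux_pdf, neg_sq]
    rw [this]; ring
  rw [hodd, integral_neg] at h
  linarith

section omega
variable {Ω : Type*} [MeasurableSpace Ω] {μ : Measure Ω} [IsProbabilityMeasure μ]
  {n : ℕ} {u : Ω → Fin n → ℝ}

lemma aux_u_pow_int (humeas : ∀ i, Measurable fun ω => u ω i)
    (hulaw : ∀ i, Measure.map (fun ω => u ω i) μ = gaussianReal 0 1) (i : Fin n) (m : ℕ) :
    Integrable (fun ω => u ω i ^ m) μ := by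
  have h := (integrable_map_measure (μ := μ) (f := fun ω => u ω i) (g := fun x : ℝ => x ^ m)
    (((measurable_id.pow_const m)).aestronglyMeasurable) ((humeas i).aemeasurable)).mp
  rw [hulaw i] at h
  exact h (aux_gauss_integrable_pow m)

lemma aux_u_int (humeas : ∀ i, Measurable fun ω => u ω i)
    (hulaw : ∀ i, Measure.map (fun ω => u ω i) μ = gaussianReal 0 1) (i : Fin n) :
    Integrable (fun ω => u ω i) μ := by
  have := aux_u_pow_int humeas hulaw i 1
  simpa using this

lemma aux_u_mean (humeas : ∀ i, Measurable fun ω => u ω i)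
    (hulaw : ∀ i, Measure.map (fun ω => u ω i) μ = gaussianReal 0 1) (i : Fin n) :
    ∫ ω, u ω i ∂μ = 0 := by
  have h := integral_map (μ := μ) (φ := fun ω => u ω i) (f := fun x : ℝ => x ^ 1)
    (humeas i).aemeasurable ((measurable_id.pow_const 1)).aestronglyMeasurable
  rw [hulaw i, aux_gauss_odd 1 odd_one] at h
  simpa using h.symm

lemma aux_u_cube (humeas : ∀ i, Measurable fun ω => u ω i)
    (hulaw : ∀ i, Measure.map (fun ω => u ω i) μ = gaussianReal 0 1) (i : Fin n) :
    ∫ ω, u ω i ^ 3 ∂μ = 0 := by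
  have h := integral_map (μ := μ) (φ := fun ω => u ω i) (f := fun x : ℝ => x ^ 3)
    (humeas i).aemeasurable ((measurable_id.pow_const 3)).aestronglyMeasurable
  rw [hulaw i, aux_gauss_odd 3 (by decide)] at h
  exact h.symm

lemma aux_abs_cube (a b c : ℝ) : |a * b * c| ≤ |a| ^ 3 + |b| ^ 3 + |c| ^ 3 := by
  rw [abs_mul, abs_mul]
  have ha := abs_nonneg a; have hb := abs_nonneg b; have hc := abs_nonneg c
  nlinarith [mul_nonneg (add_nonneg (add_nonneg ha hb) hc)
    (add_nonneg (add_nonneg (sq_nonneg (|a| - |b|)) (sq_nonneg (|b| - |c|))) (sq_nonneg (|a| - |c|))),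
    mul_nonneg ha hb, mul_nonneg hb hc, mul_nonneg ha hc]

lemma aux_u3_int (humeas : ∀ i, Measurable fun ω => u ω i)
    (hulaw : ∀ i, Measure.map (fun ω => u ω i) μ = gaussianReal 0 1) (i j k : Fin n) :
    Integrable (fun ω => u ω i * u ω j * u ω k) μ := by
  refine Integrable.mono' (g := fun ω => |u ω i ^ 3| + |u ω j ^ 3| + |u ω k ^ 3|)
    (((aux_u_pow_int humeas hulaw i 3).abs.add (aux_u_pow_int humeas hulaw j 3).abs).add
      (aux_u_pow_int humeas hulaw k 3).abs)
    (((humeas i).mul (humeas j)).mul (humeas k)).aestronglyMeasurable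
    (Filter.Eventually.of_forall fun ω => ?_)
  simp only [Real.norm_eq_abs, abs_pow]
  exact aux_abs_cube (u ω i) (u ω j) (u ω k)

lemma aux_u3_mean (humeas : ∀ i, Measurable fun ω => u ω i)
    (huindep : iIndepFun (fun i ω => u ω i) μ)
    (hulaw : ∀ i, Measure.map (fun ω => u ω i) μ = gaussianReal 0 1) (i j k : Fin n) :
    ∫ ω, u ω i * u ω j * u ω k ∂μ = 0 := by
  by_cases hjk : j = k
  · by_cases hij : i = j
    · subst hij; subst hjk
      have : (fun ω => u ω i * u ω i * u ω i) = fun ω => u ω i ^ 3 := by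
        ext ω; ring
      rw [this]
      exact aux_u_cube humeas hulaw i
    · -- j = k, i ≠ j : group (u_j * u_k) ⟂ u_i
      subst hjk
      have hindep : IndepFun (fun ω => u ω j * u ω j) (fun ω => u ω i) μ :=
        (huindep.indepFun_prodMk humeas j j i (fun h => hij h.symm) (fun h => hij h.symm)).comp
          (measurable_fst.mul measurable_snd) measurable_id
      have h := hindep.integral_mul_eq_mul_integral
        ((humeas j).mul (humeas j)).aestronglyMeasurable (humeas i).aestronglyMeasurable
      have heq : (fun ω => u ω i * u ω j * u ω j)
          = (fun ω => u ω j * u ω j) * (fun ω => u ω i) := by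
        ext ω; simp [Pi.mul_apply]; ring
      rw [heq, h, aux_u_mean humeas hulaw i, mul_zero]
  · by_cases hik : i = k
    · -- k = i, j ≠ k : group (u_i * u_k) ⟂ u_j
      subst hik
      have hji : j ≠ i := fun h => hjk h
      have hindep : IndepFun (fun ω => u ω i * u ω i) (fun ω => u ω j) μ :=
        (huindep.indepFun_prodMk humeas i i j (fun h => hji h.symm) (fun h => hji h.symm)).comp
          (measurable_fst.mul measurable_snd) measurable_id
      have h := hindep.integral_mul_eq_mul_integral
        ((humeas i).mul (humeas i)).aestronglyMeasurable (humeas j).aestronglyMeasurable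
      have heq : (fun ω => u ω i * u ω j * u ω i)
          = (fun ω => u ω i * u ω i) * (fun ω => u ω j) := by
        ext ω; simp [Pi.mul_apply]; ring
      rw [heq, h, aux_u_mean humeas hulaw j, mul_zero]
    · -- k ∉ {i, j}
      have hindep : IndepFun (fun ω => u ω i * u ω j) (fun ω => u ω k) μ :=
        (huindep.indepFun_prodMk humeas i j k hik hjk).comp
          (measurable_fst.mul measurable_snd) measurable_id
      have h := hindep.integral_mul_eq_mul_integral
        ((humeas i).mul (humeas j)).aestronglyMeasurable (humeas k).aestronglyMeasurable
      have heq : (fun ω => u ω i * u ω j * u ω k)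
          = (fun ω => u ω i * u ω j) * (fun ω => u ω k) := by
        ext ω; simp [Pi.mul_apply]
      rw [heq, h, aux_u_mean humeas hulaw k, mul_zero]

lemma aux_lin_mean (humeas : ∀ i, Measurable fun ω => u ω i)
    (hulaw : ∀ i, Measure.map (fun ω => u ω i) μ = gaussianReal 0 1) (c : Fin n → ℝ) :
    ∫ ω, (∑ m, c m * u ω m) ∂μ = 0 := by
  rw [integral_finset_sum _ (fun m _ => (aux_u_int humeas hulaw m).const_mul (c m))]
  refine Finset.sum_eq_zero fun m _ => ?_
  rw [integral_const_mul, aux_u_mean humeas hulaw m, mul_zero]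

lemma aux_key (humeas : ∀ i, Measurable fun ω => u ω i)
    (huindep : iIndepFun (fun i ω => u ω i) μ)
    (hulaw : ∀ i, Measure.map (fun ω => u ω i) μ = gaussianReal 0 1)
    (c : Fin n → ℝ) (A : ℝ) (D : Fin n → Fin n → ℝ) :
    ∫ ω, (∑ m, c m * u ω m) * (A + ∑ x, ∑ y, D x y * (u ω x * u ω y)) ∂μ = 0 := by
  have hexp : ∀ ω, (∑ m, c m * u ω m) * (A + ∑ x, ∑ y, D x y * (u ω x * u ω y))
      = (∑ m, (c m * A) * u ω m)
        + ∑ m, ∑ x, ∑ y, (c m * D x y) * (u ω m * u ω x * u ω y) := by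
    intro ω
    rw [Finset.sum_mul, ← Finset.sum_add_distrib]
    refine Finset.sum_congr rfl fun m _ => ?_
    rw [mul_add]
    congr 1
    · ring
    · rw [Finset.mul_sum]
      refine Finset.sum_congr rfl fun x _ => ?_
      rw [Finset.mul_sum]
      refine Finset.sum_congr rfl fun y _ => ?_
      ring
  rw [integral_congr_ae (Filter.Eventually.of_forall hexp)]
  have int1 : Integrable (fun ω => ∑ m, (c m * A) * u ω m) μ :=
    integrable_finset_sum _ fun m _ => (aux_u_int humeas hulaw m).const_mul _
  have int2 : Integrable
      (fun ω => ∑ m, ∑ x, ∑ y, (c m * D x y) * (u ω m * u ω x * u ω y)) μ :=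
    integrable_finset_sum _ fun m _ => integrable_finset_sum _ fun x _ =>
      integrable_finset_sum _ fun y _ => (aux_u3_int humeas hulaw m x y).const_mul _
  rw [integral_add int1 int2]
  have e1 : ∫ ω, (∑ m, (c m * A) * u ω m) ∂μ = 0 := by
    rw [integral_finset_sum _ (fun m _ => (aux_u_int humeas hulaw m).const_mul _)]
    refine Finset.sum_eq_zero fun m _ => ?_
    rw [integral_const_mul, aux_u_mean humeas hulaw m, mul_zero]
  have e2 : ∫ ω, (∑ m, ∑ x, ∑ y, (c m * D x y) * (u ω m * u ω x * u ω y)) ∂μ = 0 := by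
    rw [integral_finset_sum _ (fun m _ => integrable_finset_sum _ fun x _ =>
      integrable_finset_sum _ fun y _ => (aux_u3_int humeas hulaw m x y).const_mul _)]
    refine Finset.sum_eq_zero fun m _ => ?_
    rw [integral_finset_sum _ (fun x _ =>
      integrable_finset_sum _ fun y _ => (aux_u3_int humeas hulaw m x y).const_mul _)]
    refine Finset.sum_eq_zero fun x _ => ?_
    rw [integral_finset_sum _ (fun y _ => (aux_u3_int humeas hulaw m x y).const_mul _)]
    refine Finset.sum_eq_zero fun y _ => ?_
    rw [integral_const_mul, aux_u3_mean humeas huindep hulaw m x y, mul_zero]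
  rw [e1, e2, add_zero]

end omega




-- entry of P * vecMulVec w w * Q factorizes
lemma aux_pvq {q n : ℕ} (P : Matrix (Fin q) (Fin n) ℝ) (Q : Matrix (Fin n) (Fin q) ℝ)
    (w : Fin n → ℝ) (i i' : Fin q) :
    (P * vecMulVec w w * Q) i i' = (∑ x, P i x * w x) * (∑ y, Q y i' * w y) := by
  rw [Finset.sum_mul_sum]
  simp only [Matrix.mul_apply, vecMulVec_apply, Finset.sum_mul, Finset.mul_sum]
  rw [Finset.sum_comm]
  refine Finset.sum_congr rfl fun y _ => Finset.sum_congr rfl fun x _ => ?_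
  ring

lemma aux_mulVec_sum {q n : ℕ} (P : Matrix (Fin q) (Fin n) ℝ) (R : Matrix (Fin n) (Fin n) ℝ)
    (v : Fin n → ℝ) (i : Fin q) :
    (∑ x, P i x * (R *ᵥ v) x) = ∑ m, (P * R) i m * v m := by
  simp only [Matrix.mulVec, dotProduct, Matrix.mul_apply, Finset.mul_sum, Finset.sum_mul]
  rw [Finset.sum_comm]
  refine Finset.sum_congr rfl fun m _ => Finset.sum_congr rfl fun x _ => ?_
  ring

-- main entry formula for one factor matrix
lemma aux_entry {q n : ℕ} (σ : ℝ) (hσ : σ ≠ 0) (Zj : Matrix (Fin n) (Fin q) ℝ)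
    (V R : Matrix (Fin n) (Fin n) ℝ) (v : Fin n → ℝ) (i i' : Fin q) :
    (Zjᵀ * V⁻¹ * ((σ ^ 2)⁻¹ • vecMulVec (σ • (R *ᵥ v)) (σ • (R *ᵥ v)) - V) * V⁻¹ * Zj) i i'
    = (∑ x, ∑ y, ((Zjᵀ * V⁻¹ * R) i x * ((Rᵀ * (V⁻¹ * Zj)) y i')) * (v x * v y))
      - (Zjᵀ * V⁻¹ * V * V⁻¹ * Zj) i i' := by
  have hW : ((σ ^ 2)⁻¹ • vecMulVec (σ • (R *ᵥ v)) (σ • (R *ᵥ v)) : Matrix (Fin n) (Fin n) ℝ)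
      = vecMulVec (R *ᵥ v) (R *ᵥ v) := by
    ext x y
    simp only [Matrix.smul_apply, vecMulVec_apply, Pi.smul_apply, smul_eq_mul]
    field_simp
  rw [hW, Matrix.mul_sub, Matrix.sub_mul, Matrix.sub_mul, Matrix.sub_apply]
  congr 1
  · -- quadratic part
    rw [show Zjᵀ * V⁻¹ * vecMulVec (R *ᵥ v) (R *ᵥ v) * V⁻¹ * Zj
        = Zjᵀ * V⁻¹ * vecMulVec (R *ᵥ v) (R *ᵥ v) * (V⁻¹ * Zj) by
      rw [Matrix.mul_assoc (Zjᵀ * V⁻¹ * vecMulVec (R *ᵥ v) (R *ᵥ v))]]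
    rw [aux_pvq (Zjᵀ * V⁻¹) (V⁻¹ * Zj) (R *ᵥ v) i i']
    rw [aux_mulVec_sum (Zjᵀ * V⁻¹) R v i]
    have h2 : (∑ y, (V⁻¹ * Zj) y i' * (R *ᵥ v) y) = ∑ m, (Rᵀ * (V⁻¹ * Zj)) m i' * v m := by
      have := aux_mulVec_sum ((V⁻¹ * Zj)ᵀ) R v i'
      simp only [Matrix.transpose_apply] at this
      rw [this]
      refine Finset.sum_congr rfl fun m _ => ?_
      congr 1
      simp only [Matrix.mul_apply, Matrix.transpose_apply, Finset.mul_sum, Finset.sum_mul]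
      exact Finset.sum_congr rfl fun a _ => Finset.sum_congr rfl fun b _ => by ring
    rw [h2, Finset.sum_mul_sum]
    refine Finset.sum_congr rfl fun x _ => Finset.sum_congr rfl fun y _ => ?_
    ring

end auxiliary

/-- In the multi-factor LMM, with `e = σ R u` for `u` a vector of i.i.d.
standard normals, the cross-covariance matrix between the score `s_β = σ⁻² Xᵀ V⁻¹ e` and the
score `s_k = (1/2) vec( ∑_j Z_{(k,j)}ᵀ V⁻¹ (σ⁻² e eᵀ − V) V⁻¹ Z_{(k,j)} )` is the zero matrix. -/
theorem stmt4 {Ω : Type*} [MeasurableSpace Ω] (μ : Measure Ω) [IsProbabilityMeasure μ]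
    (n p r : ℕ) (hn : 0 < n) (hp : 0 < p) (σ : ℝ) (hσ : 0 < σ)
    (V R : Matrix (Fin n) (Fin n) ℝ) (hVpd : V.PosDef) (hR : R * Rᵀ = V)
    (X : Matrix (Fin n) (Fin p) ℝ)
    (l q : Fin r → ℕ)
    (Z : (k : Fin r) → Fin (l k) → Matrix (Fin n) (Fin (q k)) ℝ)
    (u : Ω → Fin n → ℝ)
    (humeas : ∀ i, Measurable fun ω => u ω i)
    (huindep : iIndepFun (fun i ω => u ω i) μ)
    (hulaw : ∀ i, Measure.map (fun ω => u ω i) μ = gaussianReal 0 1)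
    (e : Ω → Fin n → ℝ) (he : ∀ ω, e ω = σ • (R *ᵥ u ω))
    (sβ : Ω → Fin p → ℝ)
    (hsβ : ∀ ω, sβ ω = (σ ^ 2)⁻¹ • ((Xᵀ * V⁻¹) *ᵥ e ω))
    (s : (k : Fin r) → Ω → (Fin (q k) × Fin (q k)) → ℝ)
    -- `s k` is the `vec`-score for factor `k`: its coordinate at the column-major
    -- vectorization index `(j, i)` is the `(i, j)` entry of the score matrix
    (hs : ∀ k ω idx, s k ω idx =
      ((1 / 2 : ℝ) •
        ∑ j, (Z k j)ᵀ * V⁻¹ * ((σ ^ 2)⁻¹ • vecMulVec (e ω) (e ω) - V) * V⁻¹ * Z k j)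
        idx.2 idx.1) :
    ∀ (k : Fin r) (a : Fin p) (b : Fin (q k) × Fin (q k)),
      (∫ ω, sβ ω a * s k ω b ∂μ) - (∫ ω, sβ ω a ∂μ) * (∫ ω, s k ω b ∂μ) = 0 := by
  intro k a b
  -- linear representation of `sβ · a`
  set c : Fin n → ℝ := fun m => (σ ^ 2)⁻¹ * (σ * ((Xᵀ * V⁻¹ * R) a m)) with hc
  have hsβ' : ∀ ω, sβ ω a = ∑ m, c m * u ω m := by
    intro ω
    rw [hsβ ω, he ω]
    simp only [Pi.smul_apply, smul_eq_mul]
    rw [Matrix.mulVec_smul, Matrix.mulVec_mulVec]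
    simp only [Pi.smul_apply, smul_eq_mul, Matrix.mulVec, dotProduct]
    rw [Finset.mul_sum, Finset.mul_sum]
    exact Finset.sum_congr rfl fun m _ => by rw [hc]; ring
  -- affine-quadratic representation of `s k · b`
  set A : ℝ := -((1 / 2 : ℝ) * ∑ j, ((Z k j)ᵀ * V⁻¹ * V * V⁻¹ * Z k j) b.2 b.1) with hA
  set D : Fin n → Fin n → ℝ := fun x y =>
    (1 / 2 : ℝ) * ∑ j, ((Z k j)ᵀ * V⁻¹ * R) b.2 x * ((Rᵀ * (V⁻¹ * Z k j)) y b.1) with hD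
  have hs' : ∀ ω, s k ω b = A + ∑ x, ∑ y, D x y * (u ω x * u ω y) := by
    intro ω
    rw [hs k ω b]
    simp only [he, Matrix.smul_apply, Matrix.sum_apply, smul_eq_mul]
    rw [Finset.sum_congr rfl fun j _ => aux_entry σ (ne_of_gt hσ) (Z k j) V R (u ω) b.2 b.1]
    rw [Finset.sum_sub_distrib, mul_sub]
    have hswap :
        ∑ j, ∑ x, ∑ y,
            (((Z k j)ᵀ * V⁻¹ * R) b.2 x * ((Rᵀ * (V⁻¹ * Z k j)) y b.1)) * (u ω x * u ω y)
        = ∑ x, ∑ y, ∑ j,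
            (((Z k j)ᵀ * V⁻¹ * R) b.2 x * ((Rᵀ * (V⁻¹ * Z k j)) y b.1)) * (u ω x * u ω y) := by
      rw [Finset.sum_comm]
      exact Finset.sum_congr rfl fun x _ => Finset.sum_comm
    rw [hswap, Finset.mul_sum]
    have hxy : ∀ x : Fin n,
        (1 / 2 : ℝ) * ∑ y, ∑ j,
            (((Z k j)ᵀ * V⁻¹ * R) b.2 x * ((Rᵀ * (V⁻¹ * Z k j)) y b.1)) * (u ω x * u ω y)
        = ∑ y, D x y * (u ω x * u ω y) := by
      intro x
      rw [Finset.mul_sum]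
      refine Finset.sum_congr rfl fun y _ => ?_
      rw [hD, ← Finset.sum_mul]
      ring
    rw [Finset.sum_congr rfl fun x _ => hxy x, hA]
    ring
  have h1 : ∫ ω, sβ ω a * s k ω b ∂μ = 0 := by
    rw [show (fun ω => sβ ω a * s k ω b)
        = fun ω => (∑ m, c m * u ω m) * (A + ∑ x, ∑ y, D x y * (u ω x * u ω y)) from
      funext fun ω => by rw [hsβ' ω, hs' ω]]
    exact aux_key humeas huindep hulaw c A D
  have h2 : ∫ ω, sβ ω a ∂μ = 0 := by
    rw [show (fun ω => sβ ω a) = fun ω => ∑ m, c m * u ω m from funext hsβ']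
    exact aux_lin_mean humeas hulaw c
  rw [h1, h2, zero_mul, sub_zero]
end

section
/- For every factor index k, the cross-covariance row vector between the score s_{σ²} and the score s_k equals Cov(s_{σ²}, s_k) = (1/(2σ²))·vec( ∑_{j=1}^{l_k} Z_{(k,j)}ᵀ·V⁻¹·Z_{(k,j)} )ᵀ; that is, for every index b ∈ {1,…,q_k²}, Cov(s_{σ²}, (s_k)_b) = (1/(2σ²))·( vec( ∑_{j=1}^{l_k} Z_{(k,j)}ᵀ·V⁻¹·Z_{(k,j)} ) )_b. -/
open Matrix MeasureTheory ProbabilityTheory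
open Real

lemma g_integrable (k : ℕ) :
    Integrable (fun x : ℝ => x ^ k * Real.exp (-(2⁻¹ : ℝ) * x ^ 2)) := by
  have h := integrable_rpow_mul_exp_neg_mul_sq (b := 2⁻¹) (by norm_num)
    (s := (k : ℝ)) (lt_of_lt_of_le neg_one_lt_zero (Nat.cast_nonneg k))
  simpa [Real.rpow_natCast] using h

lemma g_I0 : ∫ x : ℝ, Real.exp (-(2⁻¹ : ℝ) * x ^ 2) = Real.sqrt (2 * π) := by
  rw [integral_gaussian]
  norm_num [div_eq_mul_inv, mul_comm]

lemma g_odd (k : ℕ) (hk : Odd k) :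
    ∫ x : ℝ, x ^ k * Real.exp (-(2⁻¹ : ℝ) * x ^ 2) = 0 := by
  have h := integral_neg_eq_self (fun x : ℝ => x ^ k * Real.exp (-(2⁻¹ : ℝ) * x ^ 2)) volume
  simp only [hk.neg_pow, neg_sq, neg_mul] at h
  rw [integral_neg] at h
  simp only [neg_mul]
  linarith

lemma g_even (k : ℕ) (hk : Even k) :
    ∫ x : ℝ, x ^ k * Real.exp (-(2⁻¹ : ℝ) * x ^ 2) =
      2 * ∫ x in Set.Ioi (0:ℝ), x ^ k * Real.exp (-(2⁻¹ : ℝ) * x ^ 2) := by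
  rw [← integral_comp_abs (f := fun x : ℝ => x ^ k * Real.exp (-(2⁻¹ : ℝ) * x ^ 2))]
  congr 1 with x
  rw [← abs_pow, abs_of_nonneg (hk.pow_nonneg x), sq_abs]

lemma g_Ioi (k : ℕ) :
    ∫ x in Set.Ioi (0:ℝ), x ^ k * Real.exp (-(2⁻¹ : ℝ) * x ^ 2) =
      (2⁻¹:ℝ) ^ (-((k:ℝ) + 1) / 2) * (1 / 2) * Real.Gamma (((k:ℝ) + 1) / 2) := by
  rw [← integral_rpow_mul_exp_neg_mul_rpow (p := 2) (q := (k:ℝ)) (b := 2⁻¹)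
    (by norm_num) (lt_of_lt_of_le neg_one_lt_zero (Nat.cast_nonneg k)) (by norm_num)]
  refine setIntegral_congr_fun measurableSet_Ioi fun x hx => ?_
  rw [Real.rpow_natCast, show ((2:ℝ):ℝ) = ((2:ℕ):ℝ) by norm_num, Real.rpow_natCast]

lemma sqrt2pi_pos : 0 < Real.sqrt (2 * π) := Real.sqrt_pos.mpr (by positivity)

lemma g_I2 : ∫ x : ℝ, x ^ 2 * Real.exp (-(2⁻¹ : ℝ) * x ^ 2) = Real.sqrt (2 * π) := by
  rw [g_even 2 (by norm_num), g_Ioi]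
  have h1 : (((2:ℕ):ℝ) + 1) / 2 = 1/2 + 1 := by norm_num
  rw [h1, Real.Gamma_add_one (by norm_num), Real.Gamma_one_half_eq]
  have h2 : (-(((2:ℕ):ℝ) + 1) / 2) = -(3/2 : ℝ) := by norm_num
  rw [h2]
  have h3 : ((2:ℝ)⁻¹) ^ (-(3/2) : ℝ) = 2 ^ ((3:ℝ)/2) := by
    rw [Real.inv_rpow (by norm_num : (0:ℝ) ≤ 2), Real.rpow_neg (by norm_num : (0:ℝ) ≤ 2),
      inv_inv]
  rw [h3]
  have h4 : (2:ℝ) ^ ((3:ℝ)/2) = 2 * Real.sqrt 2 := by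
    rw [show (3:ℝ)/2 = 1 + 1/2 by norm_num, Real.rpow_add (by norm_num), Real.rpow_one,
      ← Real.sqrt_eq_rpow]
  rw [h4, Real.sqrt_mul (by norm_num : (0:ℝ) ≤ 2)]
  ring

lemma g_I4 : ∫ x : ℝ, x ^ 4 * Real.exp (-(2⁻¹ : ℝ) * x ^ 2) = 3 * Real.sqrt (2 * π) := by
  rw [g_even 4 (by decide), g_Ioi]
  have h1 : (((4:ℕ):ℝ) + 1) / 2 = 3/2 + 1 := by norm_num
  rw [h1, Real.Gamma_add_one (by norm_num),
    show (3/2 : ℝ) = 1/2 + 1 by norm_num, Real.Gamma_add_one (by norm_num),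
    Real.Gamma_one_half_eq]
  have h2 : (-(((4:ℕ):ℝ) + 1) / 2) = -(5/2 : ℝ) := by norm_num
  rw [h2]
  have h3 : ((2:ℝ)⁻¹) ^ (-(5/2) : ℝ) = 2 ^ ((5:ℝ)/2) := by
    rw [Real.inv_rpow (by norm_num : (0:ℝ) ≤ 2), Real.rpow_neg (by norm_num : (0:ℝ) ≤ 2),
      inv_inv]
  rw [h3]
  have h4 : (2:ℝ) ^ ((5:ℝ)/2) = 4 * Real.sqrt 2 := by
    rw [show (5:ℝ)/2 = 2 + 1/2 by norm_num, Real.rpow_add (by norm_num),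
      ← Real.sqrt_eq_rpow, show (2:ℝ)^(2:ℝ) = 4 by norm_num]
  rw [h4, Real.sqrt_mul (by norm_num : (0:ℝ) ≤ 2)]
  ring

open scoped ENNReal NNReal in
lemma pdf_eq (x : ℝ) : gaussianPDFReal 0 1 x =
    (Real.sqrt (2 * π))⁻¹ * Real.exp (-(2⁻¹:ℝ) * x ^ 2) := by
  rw [gaussianPDFReal]
  simp only [NNReal.coe_one, mul_one, sub_zero]
  congr 2
  ring

lemma g_transfer (f : ℝ → ℝ) (hf : Measurable f)
    (hi : Integrable (fun x => f x * Real.exp (-(2⁻¹:ℝ) * x ^ 2))) :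
    Integrable f (gaussianReal 0 1) ∧
    ∫ x, f x ∂(gaussianReal 0 1) =
      (Real.sqrt (2 * π))⁻¹ * ∫ x, f x * Real.exp (-(2⁻¹:ℝ) * x ^ 2) := by
  have hγ : gaussianReal 0 1 = volume.withDensity (gaussianPDF 0 1) :=
    gaussianReal_of_var_ne_zero 0 one_ne_zero
  have hd : gaussianPDF 0 1 = fun x => ((gaussianPDFReal 0 1 x).toNNReal : ENNReal) := rfl
  have hdm : Measurable fun x => (gaussianPDFReal 0 1 x).toNNReal :=
    (measurable_gaussianPDFReal 0 1).real_toNNReal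
  constructor
  · rw [hγ, integrable_withDensity_iff (measurable_gaussianPDF 0 1)
      (ae_of_all _ fun x => ENNReal.ofReal_lt_top)]
    refine (hi.const_mul ((Real.sqrt (2 * π))⁻¹)).congr (ae_of_all _ fun x => ?_)
    simp only [gaussianPDF_def]
    rw [ENNReal.toReal_ofReal (gaussianPDFReal_nonneg 0 1 x), pdf_eq]
    ring
  · rw [hγ, hd, integral_withDensity_eq_integral_smul hdm]
    have h2 : ∀ x : ℝ, (gaussianPDFReal 0 1 x).toNNReal • f x =
        (Real.sqrt (2 * π))⁻¹ * (f x * Real.exp (-(2⁻¹:ℝ) * x ^ 2)) := by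
      intro x
      rw [NNReal.smul_def, smul_eq_mul, Real.coe_toNNReal _ (gaussianPDFReal_nonneg 0 1 x),
        pdf_eq]
      ring
    simp_rw [h2]
    rw [integral_const_mul]

lemma g_mom_int (k : ℕ) : Integrable (fun x : ℝ => x ^ k) (gaussianReal 0 1) :=
  (g_transfer (fun x => x ^ k) (measurable_id.pow_const k) (g_integrable k)).1

lemma g_mom_val (k : ℕ) :
    ∫ x, x ^ k ∂(gaussianReal 0 1) =
      (Real.sqrt (2 * π))⁻¹ * ∫ x : ℝ, x ^ k * Real.exp (-(2⁻¹:ℝ) * x ^ 2) :=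
  (g_transfer (fun x => x ^ k) (measurable_id.pow_const k) (g_integrable k)).2

lemma g_e1 : ∫ x, x ^ 1 ∂(gaussianReal 0 1) = 0 := by
  rw [g_mom_val, g_odd 1 (by decide)]; ring

lemma g_e2 : ∫ x, x ^ 2 ∂(gaussianReal 0 1) = 1 := by
  rw [g_mom_val, g_I2, inv_mul_cancel₀ sqrt2pi_pos.ne']

lemma g_e3 : ∫ x, x ^ 3 ∂(gaussianReal 0 1) = 0 := by
  rw [g_mom_val, g_odd 3 (by decide)]; ring

lemma g_e4 : ∫ x, x ^ 4 ∂(gaussianReal 0 1) = 3 := by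
  rw [g_mom_val, g_I4, show (Real.sqrt (2*π))⁻¹ * (3 * Real.sqrt (2*π)) =
    3 * ((Real.sqrt (2*π))⁻¹ * Real.sqrt (2*π)) by ring, inv_mul_cancel₀ sqrt2pi_pos.ne']
  ring

lemma mu_transfer {Ω : Type*} [MeasurableSpace Ω] (μ : Measure Ω) (X : Ω → ℝ)
    (hX : Measurable X) (hlaw : Measure.map X μ = gaussianReal 0 1)
    (f : ℝ → ℝ) (hf : Measurable f) (hi : Integrable f (gaussianReal 0 1)) :
    Integrable (fun ω => f (X ω)) μ ∧ ∫ ω, f (X ω) ∂μ = ∫ x, f x ∂(gaussianReal 0 1) := by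
  constructor
  · exact (integrable_map_measure hf.aestronglyMeasurable hX.aemeasurable).mp
      (hlaw ▸ hi)
  · rw [← hlaw, integral_map hX.aemeasurable hf.aestronglyMeasurable]

lemma gauss_f2 : Integrable (fun x : ℝ => x ^ 2 - 1) (gaussianReal 0 1) ∧
    ∫ x, x ^ 2 - 1 ∂(gaussianReal 0 1) = 0 := by
  have hi := (g_mom_int 2).sub (integrable_const (1:ℝ))
  refine ⟨hi, ?_⟩
  rw [integral_sub (g_mom_int 2) (integrable_const 1), g_e2, integral_const]
  simp

lemma gauss_f3 : Integrable (fun x : ℝ => x ^ 3 - x) (gaussianReal 0 1) ∧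
    ∫ x, x ^ 3 - x ∂(gaussianReal 0 1) = 0 := by
  have h1 : Integrable (fun x : ℝ => x) (gaussianReal 0 1) := by
    simpa [pow_one] using g_mom_int 1
  have e1 : ∫ x, x ∂(gaussianReal 0 1) = 0 := by
    have := g_e1; simpa [pow_one] using this
  refine ⟨(g_mom_int 3).sub h1, ?_⟩
  rw [integral_sub (g_mom_int 3) h1, g_e3, e1]
  ring

lemma gauss_f4 : Integrable (fun x : ℝ => (x ^ 2 - 1) ^ 2) (gaussianReal 0 1) ∧
    ∫ x, (x ^ 2 - 1) ^ 2 ∂(gaussianReal 0 1) = 2 := by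
  have heq : (fun x : ℝ => (x ^ 2 - 1) ^ 2) =
      fun x : ℝ => x ^ 4 - (2 : ℝ) * x ^ 2 + 1 := by funext x; ring
  have h2 : Integrable (fun x : ℝ => (2 : ℝ) * x ^ 2) (gaussianReal 0 1) :=
    (g_mom_int 2).const_mul 2
  have hi : Integrable (fun x : ℝ => x ^ 4 - (2:ℝ) * x ^ 2 + 1) (gaussianReal 0 1) :=
    ((g_mom_int 4).sub h2).add (integrable_const 1)
  rw [heq]
  refine ⟨hi, ?_⟩
  have hi2 : Integrable (fun x : ℝ => x ^ 4 - (2:ℝ) * x ^ 2) (gaussianReal 0 1) :=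
    (g_mom_int 4).sub h2
  rw [integral_add hi2 (integrable_const 1),
    integral_sub (g_mom_int 4) h2, integral_const_mul, g_e4, g_e2, integral_const]
  norm_num

section KeyCov
variable {Ω : Type*} [MeasurableSpace Ω] (μ : Measure Ω)

lemma cf1 (X : Ω → ℝ) (hX : Measurable X) (hlaw : Measure.map X μ = gaussianReal 0 1) :
    Integrable (fun ω => X ω) μ ∧ ∫ ω, X ω ∂μ = 0 := by
  have h := mu_transfer μ X hX hlaw (fun x => x) measurable_id
    (by simpa [pow_one] using g_mom_int 1)
  refine ⟨h.1, h.2.trans ?_⟩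
  simpa [pow_one] using g_e1

lemma cf2 (X : Ω → ℝ) (hX : Measurable X) (hlaw : Measure.map X μ = gaussianReal 0 1) :
    Integrable (fun ω => X ω ^ 2 - 1) μ ∧ ∫ ω, X ω ^ 2 - 1 ∂μ = 0 := by
  have h := mu_transfer μ X hX hlaw (fun x => x ^ 2 - 1)
    ((measurable_id.pow_const 2).sub measurable_const) gauss_f2.1
  exact ⟨h.1, h.2.trans gauss_f2.2⟩

lemma cf3 (X : Ω → ℝ) (hX : Measurable X) (hlaw : Measure.map X μ = gaussianReal 0 1) :
    Integrable (fun ω => X ω ^ 3 - X ω) μ ∧ ∫ ω, X ω ^ 3 - X ω ∂μ = 0 := by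
  have h := mu_transfer μ X hX hlaw (fun x => x ^ 3 - x)
    ((measurable_id.pow_const 3).sub measurable_id) gauss_f3.1
  exact ⟨h.1, h.2.trans gauss_f3.2⟩

lemma cf4 (X : Ω → ℝ) (hX : Measurable X) (hlaw : Measure.map X μ = gaussianReal 0 1) :
    Integrable (fun ω => (X ω ^ 2 - 1) ^ 2) μ ∧ ∫ ω, (X ω ^ 2 - 1) ^ 2 ∂μ = 2 := by
  have h := mu_transfer μ X hX hlaw (fun x => (x ^ 2 - 1) ^ 2)
    (((measurable_id.pow_const 2).sub measurable_const).pow_const 2) gauss_f4.1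
  exact ⟨h.1, h.2.trans gauss_f4.2⟩

lemma key_cov [IsProbabilityMeasure μ] (n : ℕ)
    (u : Ω → Fin n → ℝ) (humeas : ∀ i, Measurable fun ω => u ω i)
    (huindep : iIndepFun (fun i ω => u ω i) μ)
    (hulaw : ∀ i, Measure.map (fun ω => u ω i) μ = gaussianReal 0 1)
    (i i1 i2 : Fin n) :
    Integrable
      (fun ω => ((u ω i) ^ 2 - 1) * (u ω i1 * u ω i2 - if i1 = i2 then 1 else 0)) μ ∧
    ∫ ω, ((u ω i) ^ 2 - 1) * (u ω i1 * u ω i2 - if i1 = i2 then 1 else 0) ∂μ =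
      if i = i1 ∧ i = i2 then 2 else 0 := by
  have c1 := fun j => cf1 μ (fun ω => u ω j) (humeas j) (hulaw j)
  have c2 := fun j => cf2 μ (fun ω => u ω j) (humeas j) (hulaw j)
  have c3 := fun j => cf3 μ (fun ω => u ω j) (humeas j) (hulaw j)
  have c4 := fun j => cf4 μ (fun ω => u ω j) (humeas j) (hulaw j)
  have mφ2 : Measurable fun x : ℝ => x ^ 2 - 1 :=
    (measurable_id.pow_const 2).sub measurable_const
  have mφ3 : Measurable fun x : ℝ => x ^ 3 - x :=
    (measurable_id.pow_const 3).sub measurable_id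
  by_cases h12 : i1 = i2
  · subst h12
    rw [if_pos rfl]
    by_cases h : i = i1
    · subst h
      have heq : (fun ω => ((u ω i) ^ 2 - 1) * (u ω i * u ω i - 1)) =
          fun ω => ((u ω i) ^ 2 - 1) ^ 2 := by funext ω; ring
      rw [heq, if_pos ⟨rfl, rfl⟩]
      exact c4 i
    · have hind : IndepFun (fun ω => (u ω i) ^ 2 - 1) (fun ω => (u ω i1) ^ 2 - 1) μ :=
        (huindep.indepFun h).comp mφ2 mφ2
      have heq : (fun ω => ((u ω i) ^ 2 - 1) * (u ω i1 * u ω i1 - 1)) =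
          (fun ω => ((u ω i) ^ 2 - 1)) * (fun ω => ((u ω i1) ^ 2 - 1)) := by
        funext ω; simp only [Pi.mul_apply]; ring
      rw [heq, if_neg (fun hc => h hc.1)]
      refine ⟨hind.integrable_mul (c2 i).1 (c2 i1).1, ?_⟩
      rw [hind.integral_mul_eq_mul_integral (c2 i).1.aestronglyMeasurable (c2 i1).1.aestronglyMeasurable, (c2 i).2, (c2 i1).2, mul_zero]
  · simp only [if_neg h12]
    by_cases hi1 : i = i1
    · subst hi1
      have hne : i ≠ i2 := h12
      have hind : IndepFun (fun ω => (u ω i) ^ 3 - u ω i) (fun ω => u ω i2) μ :=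
        (huindep.indepFun hne).comp mφ3 measurable_id
      have heq : (fun ω => ((u ω i) ^ 2 - 1) * (u ω i * u ω i2 - 0)) =
          (fun ω => ((u ω i) ^ 3 - u ω i)) * (fun ω => u ω i2) := by
        funext ω; simp only [Pi.mul_apply]; ring
      rw [heq, if_neg (fun hc => hne hc.2)]
      refine ⟨hind.integrable_mul (c3 i).1 (c1 i2).1, ?_⟩
      rw [hind.integral_mul_eq_mul_integral (c3 i).1.aestronglyMeasurable (c1 i2).1.aestronglyMeasurable, (c3 i).2, zero_mul]
    · by_cases hi2 : i = i2
      · subst hi2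
        have hne : i ≠ i1 := hi1
        have hind : IndepFun (fun ω => u ω i1) (fun ω => (u ω i) ^ 3 - u ω i) μ :=
          (huindep.indepFun (fun hh => hne hh.symm)).comp measurable_id mφ3
        have heq : (fun ω => ((u ω i) ^ 2 - 1) * (u ω i1 * u ω i - 0)) =
            (fun ω => u ω i1) * (fun ω => ((u ω i) ^ 3 - u ω i)) := by
          funext ω; simp only [Pi.mul_apply]; ring
        rw [heq, if_neg (fun hc => hne hc.1)]
        refine ⟨hind.integrable_mul (c1 i1).1 (c3 i).1, ?_⟩
        rw [hind.integral_mul_eq_mul_integral (c1 i1).1.aestronglyMeasurable (c3 i).1.aestronglyMeasurable, (c3 i).2, mul_zero]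
      · have hpair : IndepFun (fun ω => (u ω i1, u ω i2)) (fun ω => u ω i) μ :=
          huindep.indepFun_prodMk humeas i1 i2 i (fun hh => hi1 hh.symm)
            (fun hh => hi2 hh.symm)
        have hind : IndepFun (fun ω => u ω i1 * u ω i2) (fun ω => (u ω i) ^ 2 - 1) μ :=
          hpair.comp (measurable_fst.mul measurable_snd) mφ2
        have hmul : Integrable (fun ω => u ω i1 * u ω i2) μ :=
          (huindep.indepFun h12).integrable_mul (c1 i1).1 (c1 i2).1
        have heq : (fun ω => ((u ω i) ^ 2 - 1) * (u ω i1 * u ω i2 - 0)) =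
            (fun ω => u ω i1 * u ω i2) * (fun ω => ((u ω i) ^ 2 - 1)) := by
          funext ω; simp only [Pi.mul_apply]; ring
        rw [heq, if_neg (fun hc => hi1 hc.1)]
        refine ⟨hind.integrable_mul hmul (c2 i).1, ?_⟩
        rw [hind.integral_mul_eq_mul_integral hmul.aestronglyMeasurable (c2 i).1.aestronglyMeasurable, (c2 i).2, mul_zero]

end KeyCov


set_option maxHeartbeats 1000000 in
/-- In the multi-factor LMM, with `e = σ R u` for `u` a vector of i.i.d.
standard normals, the cross-covariance (row) vector between the score
`s_{σ²} = −n/(2σ²) + (eᵀ V⁻¹ e)/(2σ⁴)` and the score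
`s_k = (1/2) vec( ∑_j Z_{(k,j)}ᵀ V⁻¹ (σ⁻² e eᵀ − V) V⁻¹ Z_{(k,j)} )` equals
`(1/(2σ²)) vec( ∑_j Z_{(k,j)}ᵀ V⁻¹ Z_{(k,j)} )ᵀ`. -/
theorem stmt5 {Ω : Type*} [MeasurableSpace Ω] (μ : Measure Ω) [IsProbabilityMeasure μ]
    (n p r : ℕ) (hn : 0 < n) (hp : 0 < p) (σ : ℝ) (hσ : 0 < σ)
    (V R : Matrix (Fin n) (Fin n) ℝ) (hVpd : V.PosDef) (hR : R * Rᵀ = V)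
    (X : Matrix (Fin n) (Fin p) ℝ)
    (l q : Fin r → ℕ)
    (Z : (k : Fin r) → Fin (l k) → Matrix (Fin n) (Fin (q k)) ℝ)
    (u : Ω → Fin n → ℝ)
    (humeas : ∀ i, Measurable fun ω => u ω i)
    (huindep : iIndepFun (fun i ω => u ω i) μ)
    (hulaw : ∀ i, Measure.map (fun ω => u ω i) μ = gaussianReal 0 1)
    (e : Ω → Fin n → ℝ) (he : ∀ ω, e ω = σ • (R *ᵥ u ω))
    (sσ : Ω → ℝ)
    (hsσ : ∀ ω, sσ ω = -((n : ℝ) / (2 * σ ^ 2)) + (e ω ⬝ᵥ (V⁻¹ *ᵥ e ω)) / (2 * σ ^ 4))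
    (s : (k : Fin r) → Ω → (Fin (q k) × Fin (q k)) → ℝ)
    (hs : ∀ k ω idx, s k ω idx =
      ((1 / 2 : ℝ) •
        ∑ j, (Z k j)ᵀ * V⁻¹ * ((σ ^ 2)⁻¹ • vecMulVec (e ω) (e ω) - V) * V⁻¹ * Z k j)
        idx.2 idx.1) :
    ∀ (k : Fin r) (b : Fin (q k) × Fin (q k)),
      (∫ ω, sσ ω * s k ω b ∂μ) - (∫ ω, sσ ω ∂μ) * (∫ ω, s k ω b ∂μ) =
        (1 / (2 * σ ^ 2)) * _root_.vec (∑ j, (Z k j)ᵀ * V⁻¹ * Z k j) b := by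
  intro k b
  -- invertibility facts
  have hσ2 : (σ:ℝ) ^ 2 ≠ 0 := pow_ne_zero 2 hσ.ne'
  have hVdet : IsUnit V.det := isUnit_iff_ne_zero.mpr hVpd.det_pos.ne'
  have hRdet : IsUnit R.det := by
    have h : R.det * R.det = V.det := by
      rw [← hR, Matrix.det_mul, Matrix.det_transpose]
    refine isUnit_iff_ne_zero.mpr fun h0 => ?_
    rw [h0, mul_zero] at h
    exact hVpd.det_pos.ne' h.symm
  have hRtdet : IsUnit Rᵀ.det := by rwa [Matrix.det_transpose]
  have hVsymm : Vᵀ = V := by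
    ext i j
    rw [Matrix.transpose_apply]
    exact ((by simpa using congrFun (congrFun hVpd.1 j) i) : V i j = V j i).symm
  have hV'V : V⁻¹ * V = 1 := Matrix.nonsing_inv_mul V hVdet
  have hVit : V⁻¹ᵀ = V⁻¹ := by
    rw [Matrix.transpose_nonsing_inv, hVsymm]
  have hRVR : Rᵀ * V⁻¹ * R = 1 := by
    have h1 : V⁻¹ = Rᵀ⁻¹ * R⁻¹ := by rw [← hR, Matrix.mul_inv_rev]
    rw [h1, Matrix.mul_assoc, Matrix.mul_assoc, Matrix.nonsing_inv_mul R hRdet,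
      Matrix.mul_one, Matrix.mul_nonsing_inv Rᵀ hRtdet]
  -- the matrices A j
  set A : Fin (l k) → Matrix (Fin n) (Fin (q k)) ℝ := fun j => Rᵀ * V⁻¹ * Z k j with hA
  have hAt : ∀ j, (A j)ᵀ = (Z k j)ᵀ * V⁻¹ * R := by
    intro j
    rw [hA]
    rw [Matrix.transpose_mul, Matrix.transpose_mul, Matrix.transpose_transpose, hVit,
      Matrix.mul_assoc]
  have hAA : ∀ j, (Z k j)ᵀ * V⁻¹ * Z k j = (A j)ᵀ * A j := by
    intro j
    rw [hAt]
    show _ = _ * (Rᵀ * V⁻¹ * Z k j)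
    simp only [← Matrix.mul_assoc]
    rw [Matrix.mul_assoc ((Z k j)ᵀ * V⁻¹) R Rᵀ, hR, Matrix.mul_assoc (Z k j)ᵀ V⁻¹ V,
      hV'V, Matrix.mul_one]
  -- rewriting sσ
  have hsσ' : ∀ ω, sσ ω = (1 / (2 * σ ^ 2)) * ∑ i, ((u ω i) ^ 2 - 1) := by
    intro ω
    rw [hsσ ω, he ω]
    have hq : (R *ᵥ u ω) ⬝ᵥ (V⁻¹ *ᵥ (R *ᵥ u ω)) = (u ω) ⬝ᵥ (u ω) := by
      rw [Matrix.mulVec_mulVec, Matrix.dotProduct_mulVec, ← Matrix.vecMul_transpose,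
        Matrix.vecMul_vecMul, ← Matrix.mul_assoc, hRVR, Matrix.vecMul_one]
    rw [Matrix.mulVec_smul, smul_dotProduct, dotProduct_smul, hq]
    have hself : (u ω) ⬝ᵥ (u ω) = ∑ i, (u ω i) ^ 2 := by
      simp [dotProduct, pow_two]
    rw [hself, Finset.sum_sub_distrib, Finset.sum_const, Finset.card_univ,
      Fintype.card_fin, nsmul_eq_mul, mul_one, smul_eq_mul, smul_eq_mul]
    field_simp
    ring
  -- rewriting s
  have hs' : ∀ ω, s k ω b = (1/2 : ℝ) * ∑ j, ∑ i1, ∑ i2,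
      A j i1 b.2 * (u ω i1 * u ω i2 - if i1 = i2 then 1 else 0) * A j i2 b.1 := by
    intro ω
    rw [hs k ω b]
    set U := vecMulVec (u ω) (u ω) with hU
    have h1 : vecMulVec (e ω) (e ω) = (σ ^ 2) • vecMulVec (R *ᵥ u ω) (R *ᵥ u ω) := by
      ext i j
      simp only [he, Matrix.vecMulVec_apply, Matrix.smul_apply, Pi.smul_apply, smul_eq_mul]
      ring
    have h2 : vecMulVec (R *ᵥ u ω) (R *ᵥ u ω) = R * U * Rᵀ := by
      ext i j
      simp only [Matrix.vecMulVec_apply, Matrix.mul_apply, Matrix.transpose_apply,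
        Matrix.mulVec, dotProduct, hU]
      rw [Finset.sum_mul_sum]
      rw [Finset.sum_comm]
      refine Finset.sum_congr rfl fun i2 _ => ?_
      rw [Finset.sum_mul]
      exact Finset.sum_congr rfl fun i1 _ => by ring
    have hmid : R * U * Rᵀ - V = R * (U - 1) * Rᵀ := by
      rw [Matrix.mul_sub, Matrix.mul_one, Matrix.sub_mul, hR]
    have hmat : (σ ^ 2)⁻¹ • vecMulVec (e ω) (e ω) - V = R * (U - 1) * Rᵀ := by
      rw [h1, smul_smul, inv_mul_cancel₀ hσ2, one_smul, h2, hmid]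
    simp only [hmat]
    have hterm : ∀ j, (Z k j)ᵀ * V⁻¹ * (R * (U - 1) * Rᵀ) * V⁻¹ * Z k j
        = (A j)ᵀ * (U - 1) * A j := by
      intro j
      rw [hAt]
      simp only [hA]
      simp only [← Matrix.mul_assoc]
    simp only [hterm]
    simp only [Matrix.smul_apply, Matrix.sum_apply, smul_eq_mul]
    congr 1
    refine Finset.sum_congr rfl fun j _ => ?_
    simp only [Matrix.mul_apply, Matrix.transpose_apply, Matrix.sub_apply,
      Matrix.vecMulVec_apply, Matrix.one_apply, Finset.sum_mul, hU]
    rw [Finset.sum_comm]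
  -- abbreviations
  set c : Fin (l k) → Fin n → Fin n → ℝ := fun j i1 i2 => A j i1 b.2 * A j i2 b.1 with hc
  set T : Fin n → Fin n → Fin n → Ω → ℝ := fun i i1 i2 ω =>
    ((u ω i) ^ 2 - 1) * (u ω i1 * u ω i2 - if i1 = i2 then 1 else 0) with hT
  have key := fun i i1 i2 => key_cov μ n u humeas huindep hulaw i i1 i2
  have hTint : ∀ i i1 i2, Integrable (T i i1 i2) μ := fun i i1 i2 => (key i i1 i2).1
  have hTval : ∀ i i1 i2, ∫ ω, T i i1 i2 ω ∂μ = if i = i1 ∧ i = i2 then 2 else 0 :=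
    fun i i1 i2 => (key i i1 i2).2
  -- expansion of the product
  have hint : (fun ω => sσ ω * s k ω b) = fun ω => ∑ j, ∑ i1, ∑ i2, ∑ i,
      (1 / (4 * σ ^ 2) * c j i1 i2) * T i i1 i2 ω := by
    funext ω
    rw [hsσ' ω, hs' ω]
    simp only [Finset.mul_sum, Finset.sum_mul, hc, hT]
    refine Finset.sum_congr rfl fun j _ => ?_
    refine Finset.sum_congr rfl fun i1 _ => ?_
    refine Finset.sum_congr rfl fun i2 _ => ?_
    refine Finset.sum_congr rfl fun i _ => ?_
    ring
  -- the integral of sσ is zero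
  have hI0 : ∫ ω, sσ ω ∂μ = 0 := by
    have h0 : ∫ ω, sσ ω ∂μ = ∫ ω, (1 / (2 * σ ^ 2)) * ∑ i, ((u ω i) ^ 2 - 1) ∂μ :=
      integral_congr_ae (ae_of_all μ fun ω => hsσ' ω)
    rw [h0, integral_const_mul,
      integral_finset_sum _ (fun i _ => (cf2 μ _ (humeas i) (hulaw i)).1)]
    have : ∀ i : Fin n, i ∈ Finset.univ → ∫ ω, (u ω i) ^ 2 - 1 ∂μ = 0 :=
      fun i _ => (cf2 μ _ (humeas i) (hulaw i)).2
    rw [Finset.sum_congr rfl this, Finset.sum_const, smul_zero, mul_zero]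
  -- the main integral
  have hI1 : ∫ ω, sσ ω * s k ω b ∂μ = ∑ j, ∑ i1, ∑ i2, ∑ i,
      (1 / (4 * σ ^ 2) * c j i1 i2) * (if i = i1 ∧ i = i2 then 2 else 0) := by
    rw [hint]
    rw [integral_finset_sum _ (fun j _ => integrable_finset_sum _ (fun i1 _ =>
      integrable_finset_sum _ (fun i2 _ => integrable_finset_sum _ (fun i _ =>
      (hTint i i1 i2).const_mul _))))]
    refine Finset.sum_congr rfl fun j _ => ?_
    rw [integral_finset_sum _ (fun i1 _ => integrable_finset_sum _ (fun i2 _ =>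
      integrable_finset_sum _ (fun i _ => (hTint i i1 i2).const_mul _)))]
    refine Finset.sum_congr rfl fun i1 _ => ?_
    rw [integral_finset_sum _ (fun i2 _ => integrable_finset_sum _ (fun i _ =>
      (hTint i i1 i2).const_mul _))]
    refine Finset.sum_congr rfl fun i2 _ => ?_
    rw [integral_finset_sum _ (fun i _ => (hTint i i1 i2).const_mul _)]
    refine Finset.sum_congr rfl fun i _ => ?_
    rw [integral_const_mul, hTval]
  -- rewrite the right-hand side
  have hvec : _root_.vec (∑ j, (Z k j)ᵀ * V⁻¹ * Z k j) b = ∑ j, ∑ i, c j i i := by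
    show (∑ j, (Z k j)ᵀ * V⁻¹ * Z k j) b.2 b.1 = _
    rw [Matrix.sum_apply]
    refine Finset.sum_congr rfl fun j _ => ?_
    rw [hAA j]
    simp only [Matrix.mul_apply, Matrix.transpose_apply, hc]
  rw [hI1, hI0, zero_mul, sub_zero, hvec]
  simp only [mul_ite, mul_zero, ite_and, Finset.sum_ite_eq', Finset.sum_ite_eq,
    Finset.mem_univ, if_true]
  simp only [Finset.mul_sum]
  refine Finset.sum_congr rfl fun j _ => Finset.sum_congr rfl fun i _ => ?_
  rw [hc]
  field_simp
  ring
end
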